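/- arXiv:2402.11867 — 4 statements merged into one kernel-verified Lean document; each statement's English description precedes it below -/
import Mathlib

section
/- Let r > 0 and let δ ∈ ℝ^{m×n} be a matrix with rank(δ) ≤ r. Then the nuclear norm of δ equals one half of the minimum of ‖u‖_F² + ‖v‖_F² over all factorizations δ = uvᵀ with u ∈ ℝ^{m×r} and v ∈ ℝ^{n×r}; i.e., ‖δ‖_* = (1/2) min{‖u‖_F² + ‖v‖_F² : u ∈ ℝ^{m×r}, v ∈ ℝ^{n×r}, uvᵀ = δ}, and this minimum is attained. -/
open MeasureTheory Matrix

/-- Frobenius norm of a real matrix. -/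
noncomputable def frobNorm {m n : ℕ} (A : Matrix (Fin m) (Fin n) ℝ) : ℝ :=
  Real.sqrt (∑ i, ∑ j, (A i j) ^ 2)

/-- Nuclear norm of a real matrix: the sum of its singular values, i.e. the sum of the
square roots of the eigenvalues of `Aᵀ * A`. -/
noncomputable def nuclearNorm {m n : ℕ} (A : Matrix (Fin m) (Fin n) ℝ) : ℝ :=
  ∑ i, Real.sqrt ((show (Aᵀ * A).IsHermitian by
    simpa [Matrix.conjTranspose_eq_transpose_of_trivial] using
      Matrix.isHermitian_conjTranspose_mul_self A).eigenvalues i)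

/-- Matrix inner product `⟨A, B⟩ = tr(Aᵀ B)`. -/
noncomputable def mInner {m n : ℕ} (A B : Matrix (Fin m) (Fin n) ℝ) : ℝ :=
  Matrix.trace (Aᵀ * B)

private lemma sum_ite_embed {α : Type*} [Fintype α] [DecidableEq α] {r : ℕ}
    (f : α ↪ Fin r) (a b : α → ℝ) :
    (∑ c : Fin r, (∑ j : α, if f j = c then a j else 0) *
        (∑ j : α, if f j = c then b j else 0)) = ∑ j : α, a j * b j := by
  have h1 : ∀ c : Fin r, (∑ j : α, if f j = c then a j else 0) *
      (∑ j : α, if f j = c then b j else 0)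
      = ∑ j : α, ∑ j' : α, (if f j = c then a j else 0) * (if f j' = c then b j' else 0) :=
    fun c => Finset.sum_mul_sum _ _ _ _
  rw [Finset.sum_congr rfl fun c _ => h1 c, Finset.sum_comm]
  refine Finset.sum_congr rfl fun j _ => ?_
  rw [Finset.sum_comm]
  have h2 : ∀ j' : α, (∑ c : Fin r, (if f j = c then a j else 0) * (if f j' = c then b j' else 0))
      = if j' = j then a j * b j' else 0 := by
    intro j'
    simp only [ite_mul, zero_mul, mul_ite, mul_zero]
    rw [Finset.sum_ite_eq]
    simp [EmbeddingLike.apply_eq_iff_eq, eq_comm]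
  rw [Finset.sum_congr rfl fun j' _ => h2 j']
  simp

/-- `∑_k (∑_j f j k)(∑_j' g j' k) = ∑_j ∑_j' ∑_k f j k * g j' k`. -/
private lemma sum_sum_mul_sum {ι κ : Type*} [Fintype ι] [Fintype κ] (f g : ι → κ → ℝ) :
    (∑ k : κ, (∑ j : ι, f j k) * (∑ j' : ι, g j' k))
      = ∑ j : ι, ∑ j' : ι, ∑ k : κ, f j k * g j' k := by
  have h1 : ∀ k : κ, (∑ j : ι, f j k) * (∑ j' : ι, g j' k)
      = ∑ j : ι, ∑ j' : ι, f j k * g j' k := fun k => Finset.sum_mul_sum _ _ _ _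
  rw [Finset.sum_congr rfl fun k _ => h1 k, Finset.sum_comm]
  exact Finset.sum_congr rfl fun j _ => Finset.sum_comm

set_option maxHeartbeats 1000000 in
/-- Lemma 5.1 of Recht–Fazel–Parrilo: for `δ` of rank at most `r`,
`‖δ‖_* = (1/2) min {‖u‖_F² + ‖v‖_F² : u ∈ ℝ^{m×r}, v ∈ ℝ^{n×r}, uvᵀ = δ}`,
the minimum being attained.  Equivalently, `2‖δ‖_*` is the least element of the set of
values `‖u‖_F² + ‖v‖_F²` over factorizations `δ = uvᵀ`. -/
theorem nuclearNorm_eq_half_min_factorization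
    (m n r : ℕ) (hr : 0 < r) (δ : Matrix (Fin m) (Fin n) ℝ) (hrank : δ.rank ≤ r) :
    IsLeast {c : ℝ | ∃ (u : Matrix (Fin m) (Fin r) ℝ) (v : Matrix (Fin n) (Fin r) ℝ),
        u * vᵀ = δ ∧ c = frobNorm u ^ 2 + frobNorm v ^ 2}
      (2 * nuclearNorm δ) := by
  classical
  set hA := (show (δᵀ * δ).IsHermitian by
    simpa [Matrix.conjTranspose_eq_transpose_of_trivial] using
      Matrix.isHermitian_conjTranspose_mul_self δ) with hAdef
  set w : Fin n → Fin n → ℝ := fun j => ⇑(hA.eigenvectorBasis j) with wdef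
  set lam : Fin n → ℝ := hA.eigenvalues with lamdef
  have E1 : ∀ j, (δᵀ * δ) *ᵥ w j = lam j • w j := fun j => hA.mulVec_eigenvectorBasis j
  have E2 : ∀ i j, (∑ k, w i k * w j k) = if i = j then 1 else 0 := by
    intro i j
    have h := (orthonormal_iff_ite.mp hA.eigenvectorBasis.orthonormal) i j
    simpa [PiLp.inner_apply, RCLike.inner_apply, conj_trivial, w, mul_comm] using h
  have E3 : ∀ k l, (∑ j, w j k * w j l) = if k = l then 1 else 0 := by
    intro k l
    have h1 : (hA.eigenvectorUnitary : Matrix (Fin n) (Fin n) ℝ) *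
        star (hA.eigenvectorUnitary : Matrix (Fin n) (Fin n) ℝ) = 1 :=
      Matrix.mem_unitaryGroup_iff.mp (hA.eigenvectorUnitary).2
    have h2 := congrFun (congrFun h1 k) l
    simpa [Matrix.mul_apply, Matrix.one_apply, w, Matrix.star_apply] using h2
  set uh : Fin n → Fin m → ℝ := fun j => δ *ᵥ w j with uhdef
  have E4 : ∀ i j, (∑ k, uh i k * uh j k) = if i = j then lam j else 0 := by
    intro i j
    have step : (∑ k, uh i k * uh j k) = ((δᵀ * δ) *ᵥ w j) ⬝ᵥ w i := by
      calc (∑ k, uh i k * uh j k) = uh i ⬝ᵥ uh j := rfl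
        _ = uh j ⬝ᵥ uh i := dotProduct_comm _ _
        _ = uh j ⬝ᵥ (δ *ᵥ w i) := rfl
        _ = (uh j ᵥ* δ) ⬝ᵥ w i := dotProduct_mulVec _ _ _
        _ = (δᵀ *ᵥ uh j) ⬝ᵥ w i := by rw [Matrix.mulVec_transpose]
        _ = ((δᵀ * δ) *ᵥ w j) ⬝ᵥ w i := by
              show (δᵀ *ᵥ (δ *ᵥ w j)) ⬝ᵥ w i = _
              rw [Matrix.mulVec_mulVec]
    rw [step, E1 j]
    have h2 : (lam j • w j) ⬝ᵥ w i = lam j * ∑ k, w j k * w i k := by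
      simp only [dotProduct, Pi.smul_apply, smul_eq_mul, Finset.mul_sum]
      exact Finset.sum_congr rfl fun k _ => by ring
    rw [h2, E2]
    by_cases h : i = j
    · subst h; simp
    · rw [if_neg (fun hji => h hji.symm), if_neg h, mul_zero]
  have E5 : ∀ j, 0 ≤ lam j := by
    intro j
    have h := E4 j j
    simp only [if_pos] at h
    rw [← h]
    exact Finset.sum_nonneg fun k _ => mul_self_nonneg _
  have E5' : ∀ j, lam j = 0 → uh j = 0 := by
    intro j hj
    have h := E4 j j
    simp only [if_pos, hj] at h
    funext k
    have := (Finset.sum_eq_zero_iff_of_nonneg (fun k _ => mul_self_nonneg (uh j k))).mp h k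
      (Finset.mem_univ k)
    exact mul_self_eq_zero.mp this
  have E6 : ∀ k l, δ k l = ∑ j, uh j k * w j l := by
    intro k l
    have : (∑ j, uh j k * w j l) = δ k l := by
      calc (∑ j, uh j k * w j l) = ∑ j, (∑ p, δ k p * w j p) * w j l := rfl
        _ = ∑ j, ∑ p, δ k p * w j p * w j l :=
              Finset.sum_congr rfl fun j _ => Finset.sum_mul ..
        _ = ∑ p, ∑ j, δ k p * w j p * w j l := Finset.sum_comm
        _ = ∑ p, δ k p * ∑ j, w j p * w j l := by
              refine Finset.sum_congr rfl fun p _ => ?_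
              rw [Finset.mul_sum]
              exact Finset.sum_congr rfl fun j _ => by ring
        _ = δ k l := by simp [E3, Finset.sum_ite_eq]
    exact this.symm
  set sig : Fin n → ℝ := fun j => Real.sqrt (lam j) with sigdef
  have hsig0 : ∀ j, 0 ≤ sig j := fun j => Real.sqrt_nonneg _
  have hsigsq : ∀ j, sig j ^ 2 = lam j := fun j => Real.sq_sqrt (E5 j)
  have hsigpos : ∀ j, lam j ≠ 0 → 0 < sig j := fun j h =>
    Real.sqrt_pos.mpr (lt_of_le_of_ne (E5 j) (Ne.symm h))
  have hsigz : ∀ j, lam j = 0 → sig j = 0 := fun j h => by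
    simp [sigdef, h]
  have hnuc : nuclearNorm δ = ∑ j, sig j := rfl
  have ht0 : 0 ≤ ∑ j, sig j := Finset.sum_nonneg fun j _ => hsig0 j
  have hfrob : ∀ {a b : ℕ} (A : Matrix (Fin a) (Fin b) ℝ),
      frobNorm A ^ 2 = ∑ i, ∑ j, A i j ^ 2 := by
    intro a b A
    exact Real.sq_sqrt (Finset.sum_nonneg fun i _ => Finset.sum_nonneg fun j _ => sq_nonneg _)
  -- subtype sum extension
  have hsub : ∀ (F : Fin n → ℝ), (∀ j, lam j = 0 → F j = 0) →
      (∑ j : {j // lam j ≠ 0}, F j.1) = ∑ j, F j := by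
    intro F hF
    rw [← Finset.sum_subtype (Finset.univ.filter (fun j => lam j ≠ 0)) (by simp) F]
    refine Finset.sum_subset (Finset.subset_univ _) ?_
    intro x _ hx
    simp only [Finset.mem_filter, Finset.mem_univ, true_and, not_not] at hx
    exact hF x hx
  constructor
  · -- membership: construct the factorization from the SVD
    have hcard : Fintype.card {j // lam j ≠ 0} ≤ Fintype.card (Fin r) := by
      rw [Fintype.card_fin]
      have h1 : Fintype.card {j // lam j ≠ 0} = (δᵀ * δ).rank :=
        (hA.rank_eq_card_non_zero_eigs).symm
      rw [h1, Matrix.rank_transpose_mul_self]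
      exact hrank
    obtain ⟨f⟩ := Function.Embedding.nonempty_of_card_le hcard
    set u : Matrix (Fin m) (Fin r) ℝ :=
      fun k c => ∑ j : {j // lam j ≠ 0}, if f j = c then uh j.1 k / Real.sqrt (sig j.1) else 0
      with udef
    set v : Matrix (Fin n) (Fin r) ℝ :=
      fun l c => ∑ j : {j // lam j ≠ 0}, if f j = c then Real.sqrt (sig j.1) * w j.1 l else 0
      with vdef
    refine ⟨u, v, ?_, ?_⟩
    · ext k l
      have h1 := sum_ite_embed f (fun j => uh j.1 k / Real.sqrt (sig j.1))
        (fun j => Real.sqrt (sig j.1) * w j.1 l)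
      calc (u * vᵀ) k l = ∑ c, u k c * v l c := by
            simp [Matrix.mul_apply, Matrix.transpose_apply]
        _ = ∑ j : {j // lam j ≠ 0},
              (uh j.1 k / Real.sqrt (sig j.1)) * (Real.sqrt (sig j.1) * w j.1 l) := h1
        _ = ∑ j : {j // lam j ≠ 0}, uh j.1 k * w j.1 l := by
            refine Finset.sum_congr rfl fun j _ => ?_
            have hs : Real.sqrt (sig j.1) ≠ 0 :=
              ne_of_gt (Real.sqrt_pos.mpr (hsigpos _ j.2))
            field_simp
        _ = ∑ j, uh j k * w j l :=
            hsub (fun j => uh j k * w j l) (fun j hj => by simp [E5' j hj])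
        _ = δ k l := (E6 k l).symm
    · -- value of the objective
      have hu2 : frobNorm u ^ 2 = ∑ j, sig j := by
        rw [hfrob u]
        have hrow : ∀ k, (∑ c, u k c ^ 2)
            = ∑ j : {j // lam j ≠ 0}, (uh j.1 k * uh j.1 k) / sig j.1 := by
          intro k
          have h1 := sum_ite_embed f (fun j => uh j.1 k / Real.sqrt (sig j.1))
            (fun j => uh j.1 k / Real.sqrt (sig j.1))
          simp only [sq]
          rw [show (∑ c, u k c * u k c) = _ from h1]
          refine Finset.sum_congr rfl fun j _ => ?_
          rw [div_mul_div_comm, Real.mul_self_sqrt (hsig0 j.1)]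
        rw [Finset.sum_congr rfl fun k _ => hrow k, Finset.sum_comm]
        have hcol : ∀ j : {j // lam j ≠ 0},
            (∑ k, (uh j.1 k * uh j.1 k) / sig j.1) = sig j.1 := by
          intro j
          rw [← Finset.sum_div, E4 j.1 j.1, if_pos rfl, ← hsigsq j.1, sq,
            mul_div_assoc, div_self (ne_of_gt (hsigpos _ j.2)), mul_one]
        rw [Finset.sum_congr rfl fun j _ => hcol j]
        exact hsub _ (fun j hj => hsigz j hj)
      have hv2 : frobNorm v ^ 2 = ∑ j, sig j := by
        rw [hfrob v]
        have hrow : ∀ l, (∑ c, v l c ^ 2)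
            = ∑ j : {j // lam j ≠ 0}, sig j.1 * (w j.1 l * w j.1 l) := by
          intro l
          have h1 := sum_ite_embed f (fun j => Real.sqrt (sig j.1) * w j.1 l)
            (fun j => Real.sqrt (sig j.1) * w j.1 l)
          simp only [sq]
          rw [show (∑ c, v l c * v l c) = _ from h1]
          refine Finset.sum_congr rfl fun j _ => ?_
          have := Real.mul_self_sqrt (hsig0 j.1)
          nlinarith [Real.mul_self_sqrt (hsig0 j.1)]
        rw [Finset.sum_congr rfl fun l _ => hrow l, Finset.sum_comm]
        have hcol : ∀ j : {j // lam j ≠ 0},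
            (∑ l, sig j.1 * (w j.1 l * w j.1 l)) = sig j.1 := by
          intro j
          rw [← Finset.mul_sum, E2 j.1 j.1, if_pos rfl, mul_one]
        rw [Finset.sum_congr rfl fun j _ => hcol j]
        exact hsub _ (fun j hj => hsigz j hj)
      rw [hu2, hv2, hnuc]; ring
  · -- lower bound
    rintro c ⟨u, v, huv, rfl⟩
    set N : Fin n → Fin m → ℝ := fun j k => uh j k / sig j with Ndef
    have hNN : ∀ i j, (∑ k, N i k * N j k)
        = if i = j then (if lam j = 0 then 0 else 1) else 0 := by
      intro i j
      have h1 : (∑ k, N i k * N j k) = (∑ k, uh i k * uh j k) / (sig i * sig j) := by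
        rw [Finset.sum_div]
        exact Finset.sum_congr rfl fun k _ => div_mul_div_comm _ _ _ _
      rw [h1, E4]
      by_cases h : i = j
      · subst h
        rw [if_pos rfl, if_pos rfl]
        by_cases hl : lam i = 0
        · rw [if_pos hl, hl, zero_div]
        · rw [if_neg hl, ← hsigsq i, sq, div_self]
          exact ne_of_gt (mul_pos (hsigpos _ hl) (hsigpos _ hl))
      · rw [if_neg h, if_neg h, zero_div]
    have hδ2 : ∀ k l, δ k l = ∑ j, (N j k * w j l) * sig j := by
      intro k l
      rw [E6 k l]
      refine Finset.sum_congr rfl fun j _ => ?_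
      by_cases hl : lam j = 0
      · simp [E5' j hl, hsigz j hl]
      · have : N j k * sig j = uh j k := by
          rw [Ndef]
          exact div_mul_cancel₀ _ (ne_of_gt (hsigpos _ hl))
        calc uh j k * w j l = (N j k * sig j) * w j l := by rw [this]
          _ = (N j k * w j l) * sig j := by ring
    set W : Matrix (Fin m) (Fin n) ℝ := fun k l => ∑ j, N j k * w j l with Wdef
    set t : ℝ := ∑ j, sig j with tdef
    -- Step A : ⟨W, δ⟩ = t
    have stepA : (∑ p : Fin m × Fin n, W p.1 p.2 * δ p.1 p.2) = t := by
      have expand : ∀ p : Fin m × Fin n, W p.1 p.2 * δ p.1 p.2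
          = (∑ j, N j p.1 * w j p.2) * (∑ j', (N j' p.1 * w j' p.2) * sig j') := by
        intro p
        rw [← hδ2 p.1 p.2]
      rw [Finset.sum_congr rfl fun p _ => expand p]
      rw [sum_sum_mul_sum (fun j (p : Fin m × Fin n) => N j p.1 * w j p.2)
        (fun j' (p : Fin m × Fin n) => (N j' p.1 * w j' p.2) * sig j')]
      have inner : ∀ j j', (∑ p : Fin m × Fin n,
          (N j p.1 * w j p.2) * ((N j' p.1 * w j' p.2) * sig j'))
          = ((∑ k, N j k * N j' k) * (∑ l, w j l * w j' l)) * sig j' := by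
        intro j j'
        rw [Fintype.sum_prod_type, Finset.sum_mul_sum _ _
          (fun k => N j k * N j' k) (fun l => w j l * w j' l), Finset.sum_mul]
        refine Finset.sum_congr rfl fun k _ => ?_
        rw [Finset.sum_mul]
        exact Finset.sum_congr rfl fun l _ => by ring
      rw [Finset.sum_congr rfl fun j _ => Finset.sum_congr rfl fun j' _ => inner j j']
      have diag : ∀ j, (∑ j', ((∑ k, N j k * N j' k) * (∑ l, w j l * w j' l)) * sig j')
          = sig j := by
        intro j
        have term : ∀ j', ((∑ k, N j k * N j' k) * (∑ l, w j l * w j' l)) * sig j'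
            = if j' = j then (if lam j = 0 then 0 else 1) * sig j else 0 := by
          intro j'
          rw [hNN j j', E2 j j']
          rcases eq_or_ne j j' with h | h
          · subst h; simp
          · rw [if_neg h, if_neg h, if_neg (Ne.symm h)]; ring
        rw [Finset.sum_congr rfl fun j' _ => term j']
        simp only [Finset.sum_ite_eq', Finset.mem_univ, if_true]
        by_cases hl : lam j = 0
        · rw [if_pos hl, zero_mul, hsigz j hl]
        · rw [if_neg hl, one_mul]
      rw [Finset.sum_congr rfl fun j _ => diag j]
    -- Step B : ⟨W, δ⟩ = ⟨u, W v⟩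
    set z : Fin m → Fin r → ℝ := fun k c => ∑ l, W k l * v l c with zdef
    have stepB : (∑ p : Fin m × Fin n, W p.1 p.2 * δ p.1 p.2)
        = ∑ q : Fin m × Fin r, u q.1 q.2 * z q.1 q.2 := by
      rw [Fintype.sum_prod_type, Fintype.sum_prod_type]
      have h1 : ∀ k l, W k l * δ k l = ∑ c, W k l * (u k c * v l c) := by
        intro k l
        rw [← huv]
        simp only [Matrix.mul_apply, Matrix.transpose_apply, Finset.mul_sum]
      calc (∑ k, ∑ l, W k l * δ k l) = ∑ k, ∑ l, ∑ c, W k l * (u k c * v l c) := by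
            exact Finset.sum_congr rfl fun k _ => Finset.sum_congr rfl fun l _ => h1 k l
        _ = ∑ k, ∑ c, ∑ l, W k l * (u k c * v l c) :=
            Finset.sum_congr rfl fun k _ => Finset.sum_comm
        _ = ∑ k, ∑ c, u k c * z k c := by
            refine Finset.sum_congr rfl fun k _ => Finset.sum_congr rfl fun c _ => ?_
            rw [zdef]
            simp only [Finset.mul_sum]
            exact Finset.sum_congr rfl fun l _ => by ring
    -- Step D : column contraction bound
    have stepD : (∑ q : Fin m × Fin r, z q.1 q.2 ^ 2)
        ≤ ∑ q : Fin n × Fin r, v q.1 q.2 ^ 2 := by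
      rw [Fintype.sum_prod_type_right, Fintype.sum_prod_type_right]
      refine Finset.sum_le_sum fun c _ => ?_
      set x : Fin n → ℝ := fun l => v l c with xdef
      set p : Fin n → ℝ := fun j => ∑ l, w j l * x l with pdef
      have hz : ∀ k, z k c = ∑ j, N j k * p j := by
        intro k
        rw [zdef]
        calc (∑ l, W k l * x l) = ∑ l, ∑ j, N j k * w j l * x l := by
              refine Finset.sum_congr rfl fun l _ => ?_
              rw [Wdef]
              simp only [Finset.sum_mul]
          _ = ∑ j, ∑ l, N j k * w j l * x l := Finset.sum_comm
          _ = ∑ j, N j k * p j := by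
              refine Finset.sum_congr rfl fun j _ => ?_
              rw [pdef]
              simp only [Finset.mul_sum]
              exact Finset.sum_congr rfl fun l _ => by ring
      have h1 : (∑ k, z k c ^ 2) = ∑ j, ∑ j', (∑ k, N j k * N j' k) * (p j * p j') := by
        simp only [sq]
        rw [Finset.sum_congr rfl fun k _ => by rw [hz k]]
        rw [sum_sum_mul_sum (fun j k => N j k * p j) (fun j' k => N j' k * p j')]
        refine Finset.sum_congr rfl fun j _ => Finset.sum_congr rfl fun j' _ => ?_
        rw [Finset.sum_mul]
        exact Finset.sum_congr rfl fun k _ => by ring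
      have h2 : (∑ k, z k c ^ 2) ≤ ∑ j, p j ^ 2 := by
        rw [h1]
        have term : ∀ j j', (∑ k, N j k * N j' k) * (p j * p j')
            = if j' = j then (if lam j = 0 then 0 else 1) * p j ^ 2 else 0 := by
          intro j j'
          rw [hNN j j']
          rcases eq_or_ne j j' with h | h
          · subst h; simp [sq]
          · rw [if_neg h, if_neg (Ne.symm h), zero_mul]
        rw [Finset.sum_congr rfl fun j _ => Finset.sum_congr rfl fun j' _ => term j j']
        have : ∀ j, (∑ j', if j' = j then (if lam j = 0 then 0 else 1) * p j ^ 2 else 0)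
            = (if lam j = 0 then 0 else 1) * p j ^ 2 := by
          intro j
          simp [Finset.sum_ite_eq']
        rw [Finset.sum_congr rfl fun j _ => this j]
        refine Finset.sum_le_sum fun j _ => ?_
        by_cases hl : lam j = 0
        · rw [if_pos hl, zero_mul]; exact sq_nonneg _
        · rw [if_neg hl, one_mul]
      have h3 : (∑ j, p j ^ 2) = ∑ l, x l ^ 2 := by
        simp only [sq]
        rw [Finset.sum_congr rfl fun j _ => by rw [pdef]]
        rw [sum_sum_mul_sum (fun l j => w j l * x l) (fun l' j => w j l' * x l')]
        have term : ∀ l l', (∑ j, (w j l * x l) * (w j l' * x l'))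
            = (∑ j, w j l * w j l') * (x l * x l') := by
          intro l l'
          rw [Finset.sum_mul]
          exact Finset.sum_congr rfl fun j _ => by ring
        rw [Finset.sum_congr rfl fun l _ => Finset.sum_congr rfl fun l' _ => term l l']
        have : ∀ l, (∑ l', (∑ j, w j l * w j l') * (x l * x l')) = x l * x l := by
          intro l
          have t2 : ∀ l', (∑ j, w j l * w j l') * (x l * x l')
              = if l = l' then x l * x l' else 0 := by
            intro l'
            rw [E3 l l']
            split_ifs <;> ring
          rw [Finset.sum_congr rfl fun l' _ => t2 l']
          simp [Finset.sum_ite_eq]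
        exact Finset.sum_congr rfl fun l _ => this l
      calc (∑ k, z k c ^ 2) ≤ ∑ j, p j ^ 2 := h2
        _ = ∑ l, x l ^ 2 := h3
        _ = ∑ l, v l c ^ 2 := rfl
    -- Cauchy–Schwarz and conclusion
    have hcs : t ^ 2 ≤ (∑ q : Fin m × Fin r, u q.1 q.2 ^ 2)
        * (∑ q : Fin m × Fin r, z q.1 q.2 ^ 2) := by
      rw [← stepA, stepB]
      exact Finset.sum_mul_sq_le_sq_mul_sq _ _ _
    have hSu : frobNorm u ^ 2 = ∑ q : Fin m × Fin r, u q.1 q.2 ^ 2 := by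
      rw [hfrob u, Fintype.sum_prod_type]
    have hSv : frobNorm v ^ 2 = ∑ q : Fin n × Fin r, v q.1 q.2 ^ 2 := by
      rw [hfrob v, Fintype.sum_prod_type]
    set Su := ∑ q : Fin m × Fin r, u q.1 q.2 ^ 2 with Sudef
    set Sv := ∑ q : Fin n × Fin r, v q.1 q.2 ^ 2 with Svdef
    set Sz := ∑ q : Fin m × Fin r, z q.1 q.2 ^ 2 with Szdef
    have hSu0 : 0 ≤ Su := Finset.sum_nonneg fun q _ => sq_nonneg _
    have hSv0 : 0 ≤ Sv := Finset.sum_nonneg fun q _ => sq_nonneg _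
    have h1 : t ^ 2 ≤ Su * Sv :=
      le_trans hcs (mul_le_mul_of_nonneg_left stepD hSu0)
    rw [hnuc, hSu, hSv]
    nlinarith [h1, sq_nonneg (Su - Sv), ht0, hSu0, hSv0]
end

section
/- Let X ∈ ℝ^{n×n} be symmetric positive semidefinite and let Z ∈ ℝ^{n×n} be a nonzero symmetric matrix whose range is contained in the range of X. Then there exists a nonzero real number t* such that X + t*Z is positive semidefinite and rank(X + t*Z) < rank(X). -/
open Matrix

section Aux

variable {n : ℕ}

private lemma symmDot {M : Matrix (Fin n) (Fin n) ℝ} (hM : M.IsSymm)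
    (u v : Fin n → ℝ) : u ⬝ᵥ M *ᵥ v = (M *ᵥ u) ⬝ᵥ v := by
  rw [dotProduct_mulVec, ← Matrix.vecMul_transpose, hM.eq, dotProduct_comm]

private lemma kerle {X Z : Matrix (Fin n) (Fin n) ℝ} (hXsymm : X.IsSymm) (hZsymm : Z.IsSymm)
    (hrange : LinearMap.range Z.mulVecLin ≤ LinearMap.range X.mulVecLin) :
    LinearMap.ker X.mulVecLin ≤ LinearMap.ker Z.mulVecLin := by
  intro v hv
  rw [LinearMap.mem_ker, mulVecLin_apply] at hv ⊢
  have h1 : Z *ᵥ (Z *ᵥ v) ∈ LinearMap.range X.mulVecLin :=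
    hrange ⟨Z *ᵥ v, rfl⟩
  obtain ⟨w, hw⟩ := h1
  rw [mulVecLin_apply] at hw
  have : (Z *ᵥ v) ⬝ᵥ (Z *ᵥ v) = 0 := by
    calc (Z *ᵥ v) ⬝ᵥ (Z *ᵥ v) = v ⬝ᵥ Z *ᵥ (Z *ᵥ v) := (symmDot hZsymm v (Z *ᵥ v)).symm
    _ = v ⬝ᵥ X *ᵥ w := by rw [hw]
    _ = (X *ᵥ v) ⬝ᵥ w := symmDot hXsymm v w
    _ = 0 := by rw [hv, zero_dotProduct]
  exact dotProduct_self_eq_zero.mp this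

private lemma quadExpand (X Z : Matrix (Fin n) (Fin n) ℝ) (t : ℝ) (u : Fin n → ℝ) :
    u ⬝ᵥ (X + t • Z) *ᵥ u = u ⬝ᵥ X *ᵥ u + t * (u ⬝ᵥ Z *ᵥ u) := by
  rw [add_mulVec, smul_mulVec, dotProduct_add, dotProduct_smul, smul_eq_mul]

/-- quadratic form of a matrix is continuous -/
private lemma quadCont (M : Matrix (Fin n) (Fin n) ℝ) :
    Continuous (fun v : Fin n → ℝ => v ⬝ᵥ M *ᵥ v) := by
  simp only [dotProduct, mulVec]
  fun_prop

/-- Z = 0 iff quadratic form vanishes (for symmetric Z) -/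
private lemma exists_quad_ne {Z : Matrix (Fin n) (Fin n) ℝ} (hZsymm : Z.IsSymm) (hZne : Z ≠ 0) :
    ∃ v, v ⬝ᵥ Z *ᵥ v ≠ 0 := by
  by_contra h
  push_neg at h
  apply hZne
  have hbil : ∀ u v, u ⬝ᵥ Z *ᵥ v = 0 := by
    intro u v
    have hexp := h (u + v)
    rw [add_dotProduct, mulVec_add, dotProduct_add, dotProduct_add, h u, h v] at hexp
    have hsym : v ⬝ᵥ Z *ᵥ u = u ⬝ᵥ Z *ᵥ v := by
      rw [symmDot hZsymm v u, dotProduct_comm]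
    nlinarith [hexp, hsym]
  have hmv : ∀ v, Z *ᵥ v = 0 := by
    intro v
    have := hbil v (Z *ᵥ v)
    rw [symmDot hZsymm v (Z *ᵥ v)] at this
    exact dotProduct_self_eq_zero.mp this
  ext i j
  have := congrFun (hmv (Pi.single j 1)) i
  rw [mulVec_single_one] at this
  simpa using this

/-- decomposition along range ⊕ ker for a symmetric matrix -/
private lemma decomp {X : Matrix (Fin n) (Fin n) ℝ} (hXsymm : X.IsSymm) (u : Fin n → ℝ) :
    ∃ a ∈ LinearMap.range X.mulVecLin, ∃ b ∈ LinearMap.ker X.mulVecLin, u = a + b := by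
  have hdisj : Disjoint (LinearMap.range X.mulVecLin) (LinearMap.ker X.mulVecLin) := by
    rw [Submodule.disjoint_def]
    intro v hvr hvk
    obtain ⟨w, hw⟩ := hvr
    rw [mulVecLin_apply] at hw
    rw [LinearMap.mem_ker, mulVecLin_apply] at hvk
    have : v ⬝ᵥ v = 0 := by
      calc v ⬝ᵥ v = (X *ᵥ w) ⬝ᵥ v := by rw [hw]
      _ = w ⬝ᵥ X *ᵥ v := (symmDot hXsymm w v).symm
      _ = 0 := by rw [hvk, dotProduct_zero]
    exact dotProduct_self_eq_zero.mp this
  have htop : LinearMap.range X.mulVecLin ⊔ LinearMap.ker X.mulVecLin = ⊤ := by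
    apply Submodule.eq_top_of_disjoint _ _ _ hdisj
    rw [LinearMap.finrank_range_add_finrank_ker]
  have : u ∈ LinearMap.range X.mulVecLin ⊔ LinearMap.ker X.mulVecLin := by
    rw [htop]; trivial
  obtain ⟨a, ha, b, hb, hab⟩ := Submodule.mem_sup.mp this
  exact ⟨a, ha, b, hb, hab.symm⟩

private lemma dotSelfNonneg (v : Fin n → ℝ) : 0 ≤ v ⬝ᵥ v :=
  Finset.sum_nonneg fun _ _ => mul_self_nonneg _

private lemma sqLeDot (v : Fin n → ℝ) (i : Fin n) : v i * v i ≤ v ⬝ᵥ v :=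
  Finset.single_le_sum (f := fun k => v k * v k) (fun _ _ => mul_self_nonneg _)
    (Finset.mem_univ i)

/-- uniform bound for the quadratic form of any matrix -/
private lemma zbound (Z : Matrix (Fin n) (Fin n) ℝ) :
    ∃ C : ℝ, 0 < C ∧ ∀ v : Fin n → ℝ, |v ⬝ᵥ Z *ᵥ v| ≤ C * (v ⬝ᵥ v) := by
  refine ⟨(∑ i, ∑ j, |Z i j|) + 1, by positivity, fun v => ?_⟩
  have habs : ∀ i j : Fin n, |v i| * |v j| ≤ v ⬝ᵥ v := by
    intro i j
    nlinarith [sqLeDot v i, sqLeDot v j, abs_nonneg (v i), abs_nonneg (v j),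
      sq_abs (v i), sq_abs (v j), sq_nonneg (|v i| - |v j|)]
  have h1 : v ⬝ᵥ Z *ᵥ v = ∑ i, ∑ j, v i * (Z i j * v j) := by
    simp only [dotProduct, mulVec, Finset.mul_sum]
  calc |v ⬝ᵥ Z *ᵥ v| ≤ ∑ i, ∑ j, |v i * (Z i j * v j)| := by
        rw [h1]
        exact (Finset.abs_sum_le_sum_abs _ _).trans
          (Finset.sum_le_sum fun i _ => Finset.abs_sum_le_sum_abs _ _)
    _ ≤ ∑ i, ∑ j, |Z i j| * (v ⬝ᵥ v) := by
        refine Finset.sum_le_sum fun i _ => Finset.sum_le_sum fun j _ => ?_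
        rw [abs_mul, abs_mul]
        calc |v i| * (|Z i j| * |v j|) = |Z i j| * (|v i| * |v j|) := by ring
          _ ≤ |Z i j| * (v ⬝ᵥ v) := mul_le_mul_of_nonneg_left (habs i j) (abs_nonneg _)
    _ = (∑ i, ∑ j, |Z i j|) * (v ⬝ᵥ v) := by simp [Finset.sum_mul]
    _ ≤ ((∑ i, ∑ j, |Z i j|) + 1) * (v ⬝ᵥ v) :=
        mul_le_mul_of_nonneg_right (by linarith) (dotSelfNonneg v)

/-- uniform positive lower bound for a PSD matrix on its range -/
private lemma xbound {X : Matrix (Fin n) (Fin n) ℝ} (hX : X.PosSemidef) :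
    ∃ c : ℝ, 0 < c ∧ ∀ v ∈ LinearMap.range X.mulVecLin, c * (v ⬝ᵥ v) ≤ v ⬝ᵥ X *ᵥ v := by
  have hXsymm : X.IsSymm := by
    have := hX.1; rwa [Matrix.IsHermitian, conjTranspose_eq_transpose_of_trivial] at this
  by_cases hX0 : X = 0
  · refine ⟨1, one_pos, fun v hv => ?_⟩
    subst hX0
    rw [mulVecLin_zero, LinearMap.range_zero, Submodule.mem_bot] at hv
    simp [hv]
  · -- the sphere piece of the range
    set V := LinearMap.range X.mulVecLin with hV
    set K : Set (Fin n → ℝ) := {v | v ∈ V ∧ v ⬝ᵥ v = 1} with hK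
    have hdotCont : Continuous (fun v : Fin n → ℝ => v ⬝ᵥ v) := by
      simp only [dotProduct]; fun_prop
    have hXCont : Continuous (fun v : Fin n → ℝ => v ⬝ᵥ X *ᵥ v) := by
      simp only [dotProduct, mulVec]; fun_prop
    have hKclosed : IsClosed K := by
      have : K = (V : Set (Fin n → ℝ)) ∩ {v | v ⬝ᵥ v = 1} := rfl
      rw [this]
      exact (Submodule.closed_of_finiteDimensional V).inter
        (isClosed_eq hdotCont continuous_const)
    have hKsub : K ⊆ Metric.closedBall 0 1 := by
      intro v hv
      rw [Metric.mem_closedBall, dist_zero_right]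
      rw [pi_norm_le_iff_of_nonneg zero_le_one]
      intro i
      rw [Real.norm_eq_abs, abs_le_one_iff_mul_self_le_one]
      calc v i * v i ≤ v ⬝ᵥ v := sqLeDot v i
        _ = 1 := hv.2
    have hKcompact : IsCompact K :=
      (isCompact_closedBall 0 1).of_isClosed_subset hKclosed hKsub
    -- normalization lemma
    have hnorm : ∀ v ∈ V, v ≠ 0 → ∃ u ∈ K, ∃ r : ℝ, 0 < r ∧ v = r • u := by
      intro v hvV hvne
      have hd : 0 < v ⬝ᵥ v :=
        lt_of_le_of_ne (dotSelfNonneg v) (fun h => hvne (dotProduct_self_eq_zero.mp h.symm))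
      set r := Real.sqrt (v ⬝ᵥ v) with hr
      have hrpos : 0 < r := Real.sqrt_pos.mpr hd
      have hrr : r * r = v ⬝ᵥ v := Real.mul_self_sqrt (dotSelfNonneg v)
      refine ⟨r⁻¹ • v, ⟨V.smul_mem _ hvV, ?_⟩, r, hrpos, ?_⟩
      · rw [smul_dotProduct, dotProduct_smul, smul_eq_mul, smul_eq_mul]
        field_simp
        linarith [hrr]
      · rw [smul_smul, mul_inv_cancel₀ hrpos.ne', one_smul]
    -- K nonempty
    have hKne : K.Nonempty := by
      have : ∃ w, X *ᵥ w ≠ 0 := by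
        by_contra h
        push_neg at h
        apply hX0
        ext i j
        have := congrFun (h (Pi.single j 1)) i
        rw [mulVec_single_one] at this
        simpa using this
      obtain ⟨w, hw⟩ := this
      obtain ⟨u, huK, _⟩ := hnorm (X *ᵥ w) ⟨w, rfl⟩ hw
      exact ⟨u, huK⟩
    obtain ⟨m, hmK, hmin⟩ := hKcompact.exists_isMinOn hKne hXCont.continuousOn
    set c := m ⬝ᵥ X *ᵥ m with hc
    have hc0 : 0 ≤ c := by simpa using hX.dotProduct_mulVec_nonneg m
    have hcpos : 0 < c := by
      rcases lt_or_eq_of_le hc0 with h | h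
      · exact h
      · exfalso
        have hXm : X *ᵥ m = 0 := by
          rw [← hX.dotProduct_mulVec_zero_iff]; simpa using h.symm
        obtain ⟨w, hw⟩ := hmK.1
        rw [mulVecLin_apply] at hw
        have : m ⬝ᵥ m = 0 := by
          calc m ⬝ᵥ m = (X *ᵥ w) ⬝ᵥ m := by rw [hw]
            _ = w ⬝ᵥ X *ᵥ m := (symmDot hXsymm w m).symm
            _ = 0 := by rw [hXm, dotProduct_zero]
        rw [hmK.2] at this
        exact one_ne_zero this
    refine ⟨c, hcpos, fun v hvV => ?_⟩
    by_cases hv0 : v = 0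
    · simp [hv0]
    · obtain ⟨u, huK, r, hrpos, rfl⟩ := hnorm v hvV hv0
      have h1 : c ≤ u ⬝ᵥ X *ᵥ u := hmin huK
      have h2 : (r • u) ⬝ᵥ (r • u) = r * r * (u ⬝ᵥ u) := by
        rw [smul_dotProduct, dotProduct_smul, smul_eq_mul, smul_eq_mul]; ring
      have h3 : (r • u) ⬝ᵥ X *ᵥ (r • u) = r * r * (u ⬝ᵥ X *ᵥ u) := by
        rw [mulVec_smul, smul_dotProduct, dotProduct_smul, smul_eq_mul, smul_eq_mul]; ring
      rw [h2, h3, huK.2, mul_one]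
      nlinarith [hrpos]

/-- the key interior lemma -/
private lemma lemA {X Z : Matrix (Fin n) (Fin n) ℝ} (hX : X.PosSemidef) (hZsymm : Z.IsSymm)
    (hker : LinearMap.ker X.mulVecLin ≤ LinearMap.ker Z.mulVecLin) :
    ∃ ε : ℝ, 0 < ε ∧ ∀ t : ℝ, |t| ≤ ε → (X + t • Z).PosSemidef := by
  have hXsymm : X.IsSymm := by
    have := hX.1; rwa [Matrix.IsHermitian, conjTranspose_eq_transpose_of_trivial] at this
  have hZherm : Z.IsHermitian := by
    rw [Matrix.IsHermitian, conjTranspose_eq_transpose_of_trivial]; exact hZsymm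
  have hherm : ∀ t : ℝ, (X + t • Z).IsHermitian := by
    intro t
    refine hX.1.add ?_
    rw [Matrix.IsHermitian, conjTranspose_eq_transpose_of_trivial, transpose_smul, hZsymm]
  obtain ⟨C, hC, hCb⟩ := zbound Z
  obtain ⟨c, hc, hcb⟩ := xbound hX
  refine ⟨c / C, div_pos hc hC, fun t ht => PosSemidef.of_dotProduct_mulVec_nonneg (hherm t) fun u => ?_⟩
  rw [star_trivial]
  obtain ⟨a, ha, b, hb, rfl⟩ := decomp hXsymm u
  have hXb : X *ᵥ b = 0 := by
    have := hb; rwa [LinearMap.mem_ker, mulVecLin_apply] at this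
  have hZb : Z *ᵥ b = 0 := by
    have := hker hb; rwa [LinearMap.mem_ker, mulVecLin_apply] at this
  have e1 : (a + b) ⬝ᵥ X *ᵥ (a + b) = a ⬝ᵥ X *ᵥ a := by
    rw [mulVec_add, hXb, add_zero, add_dotProduct, symmDot hXsymm b a, hXb,
      zero_dotProduct, add_zero]
  have e2 : (a + b) ⬝ᵥ Z *ᵥ (a + b) = a ⬝ᵥ Z *ᵥ a := by
    rw [mulVec_add, hZb, add_zero, add_dotProduct, symmDot hZsymm b a, hZb,
      zero_dotProduct, add_zero]
  rw [quadExpand, e1, e2]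
  have h1 : c * (a ⬝ᵥ a) ≤ a ⬝ᵥ X *ᵥ a := hcb a ha
  have h2 : |a ⬝ᵥ Z *ᵥ a| ≤ C * (a ⬝ᵥ a) := hCb a
  have h4 : 0 ≤ a ⬝ᵥ a := dotSelfNonneg a
  have h5 : |t * (a ⬝ᵥ Z *ᵥ a)| ≤ (c / C) * (C * (a ⬝ᵥ a)) := by
    rw [abs_mul]
    exact mul_le_mul ht h2 (abs_nonneg _) (le_of_lt (div_pos hc hC))
  have h6 : (c / C) * (C * (a ⬝ᵥ a)) = c * (a ⬝ᵥ a) := by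
    field_simp
  linarith [neg_abs_le (t * (a ⬝ᵥ Z *ᵥ a)), h5, h6.ge]

private lemma main' {X Z : Matrix (Fin n) (Fin n) ℝ} (hX : X.PosSemidef) (hZsymm : Z.IsSymm)
    (hrange : LinearMap.range Z.mulVecLin ≤ LinearMap.range X.mulVecLin)
    (v : Fin n → ℝ) (hv : v ⬝ᵥ Z *ᵥ v < 0) :
    ∃ t : ℝ, t ≠ 0 ∧ (X + t • Z).PosSemidef ∧ (X + t • Z).rank < X.rank := by
  have hXsymm : X.IsSymm := by
    have := hX.1; rwa [Matrix.IsHermitian, conjTranspose_eq_transpose_of_trivial] at this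
  have hker := kerle hXsymm hZsymm hrange
  obtain ⟨ε, hε, hA⟩ := lemA hX hZsymm hker
  set S := {t : ℝ | (X + t • Z).PosSemidef} with hS
  have hεS : ε ∈ S := hA ε (by rw [abs_of_pos hε])
  have hbdd : BddAbove S := by
    refine ⟨(v ⬝ᵥ X *ᵥ v) / (-(v ⬝ᵥ Z *ᵥ v)), fun t htS => ?_⟩
    have h0 : 0 ≤ v ⬝ᵥ X *ᵥ v + t * (v ⬝ᵥ Z *ᵥ v) := by
      have := htS.dotProduct_mulVec_nonneg v
      rwa [star_trivial, quadExpand] at this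
    rw [le_div_iff₀ (by linarith : (0:ℝ) < -(v ⬝ᵥ Z *ᵥ v))]
    nlinarith
  have hherm : ∀ t : ℝ, (X + t • Z).IsHermitian := by
    intro t
    refine hX.1.add ?_
    rw [Matrix.IsHermitian, conjTranspose_eq_transpose_of_trivial, transpose_smul, hZsymm]
  have hclosed : IsClosed S := by
    have hSeq : S = ⋂ u : Fin n → ℝ, {t : ℝ | 0 ≤ u ⬝ᵥ X *ᵥ u + t * (u ⬝ᵥ Z *ᵥ u)} := by
      ext t
      simp only [Set.mem_iInter, Set.mem_setOf_eq, hS]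
      constructor
      · intro h u
        have := h.dotProduct_mulVec_nonneg u
        rwa [star_trivial, quadExpand] at this
      · intro h
        refine PosSemidef.of_dotProduct_mulVec_nonneg (hherm t) fun u => ?_
        rw [star_trivial, quadExpand]
        exact h u
    rw [hSeq]
    exact isClosed_iInter fun u => isClosed_le continuous_const (by fun_prop)
  set t0 := sSup S with ht0
  have ht0S : t0 ∈ S := hclosed.csSup_mem ⟨ε, hεS⟩ hbdd
  have ht0pos : 0 < t0 := lt_of_lt_of_le hε (le_csSup hbdd hεS)
  have hsub : ∀ t : ℝ, LinearMap.range (X + t • Z).mulVecLin ≤ LinearMap.range X.mulVecLin := by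
    intro t y hy
    obtain ⟨u, hu⟩ := hy
    rw [mulVecLin_apply] at hu
    obtain ⟨w, hw⟩ := hrange ⟨u, rfl⟩
    rw [mulVecLin_apply] at hw
    refine ⟨u + t • w, ?_⟩
    rw [mulVecLin_apply, mulVec_add, mulVec_smul, hw, ← hu, add_mulVec, smul_mulVec]
    rfl
  refine ⟨t0, ht0pos.ne', ht0S, ?_⟩
  have hle : (X + t0 • Z).rank ≤ X.rank := Submodule.finrank_mono (hsub t0)
  refine lt_of_le_of_ne hle ?_
  intro heq
  have hre : LinearMap.range (X + t0 • Z).mulVecLin = LinearMap.range X.mulVecLin :=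
    Submodule.eq_of_le_of_finrank_eq (hsub t0) heq
  have hXsymm' : (X + t0 • Z).IsSymm := by
    rw [Matrix.IsSymm, transpose_add, transpose_smul, hXsymm, hZsymm]
  have hker' : LinearMap.ker (X + t0 • Z).mulVecLin ≤ LinearMap.ker Z.mulVecLin :=
    kerle hXsymm' hZsymm (by rw [hre]; exact hrange)
  obtain ⟨ε', hε', hA'⟩ := lemA ht0S hZsymm hker'
  have hmem : (t0 + ε') ∈ S := by
    have h := hA' ε' (by rw [abs_of_pos hε'])
    have he : X + (t0 + ε') • Z = (X + t0 • Z) + ε' • Z := by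
      rw [add_smul, add_assoc]
    show (X + (t0 + ε') • Z).PosSemidef
    rw [he]
    exact h
  have := le_csSup hbdd hmem
  linarith

end Aux

/-- Lemma A.2: if `X ⪰ 0` and `Z` is a nonzero symmetric matrix with
`range Z ⊆ range X`, then there is a nonzero `t*` with `X + t* Z ⪰ 0` and
`rank (X + t* Z) < rank X`. -/
theorem rank_reduction_along_symmetric_direction
    (n : ℕ) (X Z : Matrix (Fin n) (Fin n) ℝ)
    (hX : X.PosSemidef) (hZsymm : Z.IsSymm) (hZne : Z ≠ 0)
    (hrange : LinearMap.range Z.mulVecLin ≤ LinearMap.range X.mulVecLin) :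
    ∃ t : ℝ, t ≠ 0 ∧ (X + t • Z).PosSemidef ∧ (X + t • Z).rank < X.rank := by
  obtain ⟨v, hv⟩ := exists_quad_ne hZsymm hZne
  rcases lt_trichotomy (v ⬝ᵥ Z *ᵥ v) 0 with h | h | h
  · exact main' hX hZsymm hrange v h
  · exact absurd h hv
  · have hZsymm' : (-Z).IsSymm := by
      rw [Matrix.IsSymm, transpose_neg, hZsymm]
    have hrange' : LinearMap.range (-Z).mulVecLin ≤ LinearMap.range X.mulVecLin := by
      intro y hy
      obtain ⟨u, hu⟩ := hy
      rw [mulVecLin_apply, neg_mulVec] at hu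
      refine hrange ⟨-u, ?_⟩
      rw [mulVecLin_apply, mulVec_neg, hu]
    have hv' : v ⬝ᵥ (-Z) *ᵥ v < 0 := by
      rw [neg_mulVec, dotProduct_neg]
      linarith
    obtain ⟨t, ht, hpsd, hrank⟩ := main' hX hZsymm' hrange' v hv'
    have he : X + (-t) • Z = X + t • (-Z) := by
      rw [smul_neg, neg_smul]
    exact ⟨-t, neg_ne_zero.mpr ht, by rw [he]; exact hpsd, by rw [he]; exact hrank⟩
end

section
/- Let X ∈ ℝ^{n×n} be a nonzero symmetric positive semidefinite matrix and let Z ∈ ℝ^{n×n} be a nonzero symmetric matrix whose range is contained in the range of X. Then there exists t* > 0 such that both X + t*Z and X − t*Z are positive semidefinite. -/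
open Matrix

/-- Lemma A.3: if `X ⪰ 0` is nonzero and `Z` is a nonzero symmetric matrix
with `range Z ⊆ range X`, then there is `t* > 0` with both `X + t* Z ⪰ 0` and `X - t* Z ⪰ 0`. -/
theorem two_sided_psd_perturbation
    (n : ℕ) (X Z : Matrix (Fin n) (Fin n) ℝ)
    (hX : X.PosSemidef) (hXne : X ≠ 0) (hZsymm : Z.IsSymm) (hZne : Z ≠ 0)
    (hrange : LinearMap.range Z.mulVecLin ≤ LinearMap.range X.mulVecLin) :
    ∃ t : ℝ, 0 < t ∧ (X + t • Z).PosSemidef ∧ (X - t • Z).PosSemidef := by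
  classical
  have hXs : Xᵀ = X := by simpa [IsSymm] using hX.1
  have hZs : Zᵀ = Z := hZsymm
  -- swap lemma for symmetric matrices
  have hswap : ∀ (A : Matrix (Fin n) (Fin n) ℝ), Aᵀ = A → ∀ u v : Fin n → ℝ,
      u ⬝ᵥ A *ᵥ v = (A *ᵥ u) ⬝ᵥ v := by
    intro A hA u v
    rw [dotProduct_mulVec, ← mulVec_transpose, hA]
  set R := LinearMap.range X.mulVecLin with hRdef
  set K := LinearMap.ker X.mulVecLin with hKdef
  have hdotnn : ∀ v : Fin n → ℝ, (0:ℝ) ≤ v ⬝ᵥ v := by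
    intro v
    exact Finset.sum_nonneg fun i _ => mul_self_nonneg _
  -- Z kills ker X
  have hZker : ∀ q : Fin n → ℝ, X *ᵥ q = 0 → Z *ᵥ q = 0 := by
    intro q hq
    set u := Z *ᵥ q with hu
    obtain ⟨w, hw⟩ := hrange ⟨u, rfl⟩
    have hw' : Z *ᵥ u = X *ᵥ w := by simpa [mulVecLin_apply] using hw.symm
    have h1 : u ⬝ᵥ u = 0 := by
      have h2 : u ⬝ᵥ u = q ⬝ᵥ Z *ᵥ u := by rw [hswap Z hZs q u, hu]
      rw [h2, hw', hswap X hXs q w, hq, zero_dotProduct]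
    exact dotProduct_self_eq_zero.mp h1
  -- range ⊔ ker = ⊤
  have hinf : R ⊓ K = ⊥ := by
    rw [Submodule.eq_bot_iff]
    rintro u ⟨⟨w, rfl⟩, hu2⟩
    have hu2' : X *ᵥ (X *ᵥ w) = 0 := by
      simpa [hKdef, LinearMap.mem_ker, mulVecLin_apply] using hu2
    have : (X.mulVecLin w) ⬝ᵥ (X.mulVecLin w) = 0 := by
      simp only [mulVecLin_apply]
      rw [← hswap X hXs w (X *ᵥ w), hu2', dotProduct_zero]
    exact dotProduct_self_eq_zero.mp this
  have hsup : R ⊔ K = ⊤ := by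
    apply Submodule.eq_top_of_finrank_eq
    have h1 := Submodule.finrank_sup_add_finrank_inf_eq R K
    rw [hinf] at h1
    simp only [finrank_bot, add_zero] at h1
    rw [h1]
    exact LinearMap.finrank_range_add_finrank_ker X.mulVecLin
  -- the compact set of unit vectors in the range
  set S : Set (Fin n → ℝ) := {v | v ∈ R ∧ v ⬝ᵥ v = 1} with hSdef
  have hfc : Continuous fun v : Fin n → ℝ => v ⬝ᵥ X *ᵥ v :=
    continuous_id.dotProduct (continuous_const.matrix_mulVec continuous_id)
  have hgc : Continuous fun v : Fin n → ℝ => |v ⬝ᵥ Z *ᵥ v| :=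
    (continuous_id.dotProduct (continuous_const.matrix_mulVec continuous_id)).abs
  have hdc : Continuous fun v : Fin n → ℝ => v ⬝ᵥ v :=
    continuous_id.dotProduct continuous_id
  have hSclosed : IsClosed S := by
    have h1 : IsClosed (R : Set (Fin n → ℝ)) := Submodule.closed_of_finiteDimensional R
    have h2 : IsClosed {v : Fin n → ℝ | v ⬝ᵥ v = 1} := isClosed_eq hdc continuous_const
    exact h1.inter h2
  have hSbdd : Bornology.IsBounded S := by
    apply (Metric.isBounded_closedBall (x := (0 : Fin n → ℝ)) (r := 1)).subset
    rintro v ⟨-, hv⟩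
    rw [Metric.mem_closedBall, dist_zero_right]
    apply pi_norm_le_iff_of_nonneg zero_le_one |>.mpr
    intro i
    have h1 : v i * v i ≤ v ⬝ᵥ v := by
      refine Finset.single_le_sum (fun j _ => mul_self_nonneg (v j)) (Finset.mem_univ i)
    rw [hv] at h1
    rw [Real.norm_eq_abs]
    nlinarith [sq_abs (v i), abs_nonneg (v i)]
  have hScompact : IsCompact S := Metric.isCompact_of_isClosed_isBounded hSclosed hSbdd
  -- normalization: every nonzero p in R scales into S
  have hnorm : ∀ p : Fin n → ℝ, p ∈ R → p ≠ 0 →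
      ∃ c : ℝ, 0 < c ∧ c • p ∈ S ∧ c * c * (p ⬝ᵥ p) = 1 := by
    intro p hp hpne
    have ha : 0 < p ⬝ᵥ p :=
      lt_of_le_of_ne (hdotnn p) (fun h => hpne (dotProduct_self_eq_zero.mp h.symm))
    refine ⟨(Real.sqrt (p ⬝ᵥ p))⁻¹, inv_pos.mpr (Real.sqrt_pos.mpr ha), ?_, ?_⟩
    · constructor
      · exact Submodule.smul_mem R _ hp
      · rw [smul_dotProduct, dotProduct_smul, smul_eq_mul, smul_eq_mul, ← mul_assoc,
          ← mul_inv, Real.mul_self_sqrt ha.le]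
        exact inv_mul_cancel₀ ha.ne'
    · rw [← mul_inv, Real.mul_self_sqrt ha.le]
      exact inv_mul_cancel₀ ha.ne'
  -- S is nonempty
  have hSne : S.Nonempty := by
    have : ∃ w, X *ᵥ w ≠ 0 := by
      by_contra h
      push_neg at h
      apply hXne
      ext i j
      have := congrFun (h (Pi.single j 1)) i
      simpa [mulVec_single] using this
    obtain ⟨w, hw⟩ := this
    obtain ⟨c, -, hc, -⟩ := hnorm (X *ᵥ w) ⟨w, rfl⟩ hw
    exact ⟨_, hc⟩
  -- min of the X-form and max of the Z-form on S
  obtain ⟨v₀, hv₀S, hmin⟩ := hScompact.exists_isMinOn hSne hfc.continuousOn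
  obtain ⟨v₁, hv₁S, hmax⟩ := hScompact.exists_isMaxOn hSne hgc.continuousOn
  set ε := v₀ ⬝ᵥ X *ᵥ v₀ with hε
  set M := |v₁ ⬝ᵥ Z *ᵥ v₁| with hM
  have hMnn : 0 ≤ M := abs_nonneg _
  have hεpos : 0 < ε := by
    have h0 : 0 ≤ ε := by simpa using hX.dotProduct_mulVec_nonneg v₀
    rcases h0.lt_or_eq with h | h
    · exact h
    · exfalso
      have hker : X *ᵥ v₀ = 0 := by
        have := (hX.dotProduct_mulVec_zero_iff v₀).mp (by simpa using h.symm)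
        simpa using this
      have : v₀ ⬝ᵥ v₀ = 0 := by
        obtain ⟨⟨w, rfl⟩, -⟩ := hv₀S
        simp only [mulVecLin_apply] at hker ⊢
        rw [← hswap X hXs w (X *ᵥ w), hker, dotProduct_zero]
      rw [hv₀S.2] at this
      exact one_ne_zero this
  set t := ε / (M + 1) with ht
  have htpos : 0 < t := div_pos hεpos (by linarith)
  -- key bound on the range
  have hkeyR : ∀ p : Fin n → ℝ, p ∈ R → t * |p ⬝ᵥ Z *ᵥ p| ≤ p ⬝ᵥ X *ᵥ p := by
    intro p hp
    by_cases hpne : p = 0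
    · simp [hpne]
    obtain ⟨c, hcpos, hcS, hc1⟩ := hnorm p hp hpne
    have hfu : ε ≤ (c • p) ⬝ᵥ X *ᵥ (c • p) := hmin hcS
    have hgu : |(c • p) ⬝ᵥ Z *ᵥ (c • p)| ≤ M := hmax hcS
    have hXe : (c • p) ⬝ᵥ X *ᵥ (c • p) = c * c * (p ⬝ᵥ X *ᵥ p) := by
      rw [mulVec_smul, smul_dotProduct, dotProduct_smul, smul_eq_mul, smul_eq_mul]; ring
    have hZe : |(c • p) ⬝ᵥ Z *ᵥ (c • p)| = c * c * |p ⬝ᵥ Z *ᵥ p| := by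
      rw [mulVec_smul, smul_dotProduct, dotProduct_smul, smul_eq_mul, smul_eq_mul, ← mul_assoc,
        abs_mul, abs_of_nonneg (mul_self_nonneg c)]
    rw [hXe] at hfu; rw [hZe] at hgu
    have hteq : t * (M + 1) = ε := by
      rw [ht]; field_simp
    have habs : 0 ≤ |p ⬝ᵥ Z *ᵥ p| := abs_nonneg _
    nlinarith [mul_pos hcpos hcpos, mul_le_mul_of_nonneg_left hgu (le_of_lt htpos),
      mul_le_mul_of_nonneg_left hfu (mul_self_nonneg c)]
  -- key bound everywhere, via the decomposition
  have hkey : ∀ x : Fin n → ℝ, t * |x ⬝ᵥ Z *ᵥ x| ≤ x ⬝ᵥ X *ᵥ x := by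
    intro x
    have hx : x ∈ R ⊔ K := hsup ▸ Submodule.mem_top
    obtain ⟨p, hp, q, hq, rfl⟩ := Submodule.mem_sup.mp hx
    have hXq : X *ᵥ q = 0 := by simpa [hKdef, LinearMap.mem_ker, mulVecLin_apply] using hq
    have hZq : Z *ᵥ q = 0 := hZker q hXq
    have e1 : (p + q) ⬝ᵥ X *ᵥ (p + q) = p ⬝ᵥ X *ᵥ p := by
      rw [mulVec_add, hXq, add_zero, add_dotProduct, hswap X hXs q p, hXq, zero_dotProduct,
        add_zero]
    have e2 : (p + q) ⬝ᵥ Z *ᵥ (p + q) = p ⬝ᵥ Z *ᵥ p := by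
      rw [mulVec_add, hZq, add_zero, add_dotProduct, hswap Z hZs q p, hZq, zero_dotProduct,
        add_zero]
    rw [e1, e2]
    exact hkeyR p hp
  -- conclude
  refine ⟨t, htpos, ?_, ?_⟩
  · refine posSemidef_iff_dotProduct_mulVec.mpr ⟨?_, ?_⟩
    · have hZh : Z.IsHermitian := hZsymm
      have : (t • Z).IsHermitian := by
        show (t • Z)ᴴ = t • Z
        rw [conjTranspose_smul, hZh, star_trivial]
      exact hX.1.add this
    · intro x
      have hk := hkey x
      have h1 := mul_le_mul_of_nonneg_left (neg_abs_le (x ⬝ᵥ Z *ᵥ x)) htpos.le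
      simp only [star_trivial, add_mulVec, smul_mulVec, dotProduct_add, dotProduct_smul,
        smul_eq_mul]
      nlinarith
  · refine posSemidef_iff_dotProduct_mulVec.mpr ⟨?_, ?_⟩
    · have hZh : Z.IsHermitian := hZsymm
      have : (t • Z).IsHermitian := by
        show (t • Z)ᴴ = t • Z
        rw [conjTranspose_smul, hZh, star_trivial]
      exact hX.1.sub this
    · intro x
      have hk := hkey x
      have h1 := mul_le_mul_of_nonneg_left (le_abs_self (x ⬝ᵥ Z *ᵥ x)) htpos.le
      simp only [star_trivial, sub_mulVec, smul_mulVec, dotProduct_sub, dotProduct_smul,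
        smul_eq_mul]
      nlinarith
end

section
/- Fix λ ≥ 0, assume L̂_λ has a global minimizer over ℝ^{m×n} (not necessarily unique), let P ∈ S₊^{m+n} be a nonzero positive semidefinite matrix, and let r > 0. If Q̂ = [û; v̂] ∈ ℝ^{(m+n)×r} (with û ∈ ℝ^{m×r}, v̂ ∈ ℝ^{n×r}) is a second-order stationary point of L̂_{λ,P} and Q̂ is rank deficient (rank(Q̂) < r), then (û, v̂) is a global minimizer of L̂_{λ,P}. -/
open MeasureTheory Matrix

/-- The linearized empirical risk
`L̂(δ) = (1/N) ∑ᵢ ℓᵢ(bᵢ + (⟨G i j, δ⟩)ⱼ)`. -/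
noncomputable def Lhat {m n K N : ℕ} (G : Fin N → Fin K → Matrix (Fin m) (Fin n) ℝ)
    (b : Fin N → Fin K → ℝ) (ℓ : Fin N → (Fin K → ℝ) → ℝ)
    (δ : Matrix (Fin m) (Fin n) ℝ) : ℝ :=
  (1 / (N : ℝ)) * ∑ i, ℓ i fun j => b i j + mInner (G i j) δ

/-- `Q = [u; v]`: vertical stacking of `u : ℝ^{m×r}` on top of `v : ℝ^{n×r}`. -/
def stack {m n r : ℕ} (u : Matrix (Fin m) (Fin r) ℝ) (v : Matrix (Fin n) (Fin r) ℝ) :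
    Matrix (Fin (m + n)) (Fin r) ℝ :=
  fun i j => Fin.addCases (motive := fun _ => ℝ) (fun i' => u i' j) (fun i' => v i' j) i

attribute [local instance] Matrix.normedAddCommGroup Matrix.normedSpace

/-- A second-order stationary point: the gradient vanishes and the Hessian quadratic form is
nonnegative in every direction. -/
def IsSOSP {E : Type*} [NormedAddCommGroup E] [NormedSpace ℝ E] (f : E → ℝ) (x : E) : Prop :=
  fderiv ℝ f x = 0 ∧ ∀ v : E, 0 ≤ iteratedFDeriv ℝ 2 f x ![v, v]

/-- The perturbed loss
`L̂_{λ,P}(u,v) = L̂(uvᵀ) + (λ/2)‖u‖_F² + (λ/2)‖v‖_F² + ⟨P, QQᵀ⟩` with `Q = [u; v]`. -/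
noncomputable def LhatP {m n K N : ℕ} (r : ℕ) (G : Fin N → Fin K → Matrix (Fin m) (Fin n) ℝ)
    (b : Fin N → Fin K → ℝ) (ℓ : Fin N → (Fin K → ℝ) → ℝ) (lam : ℝ)
    (P : Matrix (Fin (m + n)) (Fin (m + n)) ℝ)
    (uv : Matrix (Fin m) (Fin r) ℝ × Matrix (Fin n) (Fin r) ℝ) : ℝ :=
  Lhat G b ℓ (uv.1 * uv.2ᵀ) + lam / 2 * frobNorm uv.1 ^ 2 + lam / 2 * frobNorm uv.2 ^ 2
    + mInner P (stack uv.1 uv.2 * (stack uv.1 uv.2)ᵀ)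

section GeneralAux

variable {E : Type*} [NormedAddCommGroup E] [NormedSpace ℝ E]

/-- Gradient inequality for a convex differentiable function. -/
lemma convex_grad_ineq {f : E → ℝ} (hc : ConvexOn ℝ Set.univ f) {x : E} {φ : E →L[ℝ] ℝ}
    (hd : HasFDerivAt f φ x) (y : E) : f x + φ (y - x) ≤ f y := by
  set F : ℝ → ℝ := fun t => f (x + t • (y - x)) with hF
  have hline : ConvexOn ℝ Set.univ F := by
    have h1 := hc.comp_affineMap (AffineMap.lineMap x y : ℝ →ᵃ[ℝ] E)
    have h2 : (f ∘ (AffineMap.lineMap x y : ℝ →ᵃ[ℝ] E)) = F := by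
      funext t
      show f _ = _
      exact congrArg f (by simp [AffineMap.lineMap_apply_module]; module)
    rw [h2, Set.preimage_univ] at h1
    exact h1
  have hc0 : HasDerivAt (fun t : ℝ => x + t • (y - x)) (y - x) 0 := by
    simpa using ((hasDerivAt_id (0:ℝ)).smul_const (y - x)).const_add x
  have hF0 : HasDerivAt F (φ (y - x)) 0 := by
    have hd' : HasFDerivAt f φ (x + (0:ℝ) • (y - x)) := by simpa using hd
    exact hd'.comp_hasDerivAt (0:ℝ) hc0
  have hslope := hline.le_slope_of_hasDerivAt (Set.mem_univ 0) (Set.mem_univ 1) zero_lt_one hF0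
  have h1 : F 1 = f y := by simp [hF]
  have h0 : F 0 = f x := by simp [hF]
  rw [slope_def_field] at hslope
  simp [h1, h0] at hslope
  have hsub : φ (y - x) = φ y - φ x := map_sub φ y x
  linarith

/-- Derivative along a line. -/
lemma hasDerivAt_line {f : E → ℝ} (hf : Differentiable ℝ f) (x v : E) (t : ℝ) :
    HasDerivAt (fun s => f (x + s • v)) (fderiv ℝ f (x + t • v) v) t := by
  have hc : HasDerivAt (fun s : ℝ => x + s • v) v t := by
    simpa using ((hasDerivAt_id t).smul_const v).const_add x
  exact (hf (x + t • v)).hasFDerivAt.comp_hasDerivAt t hc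

lemma bridge2 {f : E → ℝ} (hf : Differentiable ℝ f) (x v : E) :
    deriv (fun t : ℝ => f (x + t • v)) 0 = fderiv ℝ f x v := by
  have := (hasDerivAt_line hf x v 0).deriv
  simpa using this

lemma bridge1 {f : E → ℝ} (hf : ContDiff ℝ 2 f) (x v : E) :
    iteratedFDeriv ℝ 2 f x ![v, v] = deriv (deriv (fun t : ℝ => f (x + t • v))) 0 := by
  have hdf : Differentiable ℝ f := hf.differentiable (by norm_num)
  have hder : deriv (fun t : ℝ => f (x + t • v)) = fun t => fderiv ℝ f (x + t • v) v :=
    funext fun t => (hasDerivAt_line hdf x v t).deriv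
  have hF : ContDiff ℝ 1 (fderiv ℝ f) := hf.fderiv_right (by norm_num)
  have hc : HasDerivAt (fun s : ℝ => x + s • v) v 0 := by
    simpa using ((hasDerivAt_id (0:ℝ)).smul_const v).const_add x
  have h1 : HasDerivAt (fun t : ℝ => fderiv ℝ f (x + t • v)) (fderiv ℝ (fderiv ℝ f) x v) 0 := by
    have hd : HasFDerivAt (fderiv ℝ f) (fderiv ℝ (fderiv ℝ f) x) x :=
      ((hF.differentiable (by norm_num)) x).hasFDerivAt
    have hd' : HasFDerivAt (fderiv ℝ f) (fderiv ℝ (fderiv ℝ f) x) (x + (0:ℝ) • v) := by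
      simpa using hd
    exact hd'.comp_hasDerivAt (0:ℝ) hc
  have h2 : HasDerivAt (fun t : ℝ => fderiv ℝ f (x + t • v) v)
      (fderiv ℝ (fderiv ℝ f) x v v) 0 := by
    have := h1.clm_apply (hasDerivAt_const (0:ℝ) v)
    simpa using this
  rw [iteratedFDeriv_two_apply, hder]
  simp only [Matrix.cons_val_zero, Matrix.cons_val_one, Matrix.head_cons]
  exact h2.deriv.symm

end GeneralAux

section GeneralAux2
variable {E : Type*} [NormedAddCommGroup E] [NormedSpace ℝ E]

lemma deriv2_quad {f : E → ℝ} (hf : ContDiff ℝ 2 f) (X A : E) (c : ℝ) :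
    deriv (deriv (fun t : ℝ => f (X + (t ^ 2 * c) • A))) 0 = 2 * c * fderiv ℝ f X A := by
  have hdf : Differentiable ℝ f := hf.differentiable (by norm_num)
  have hcurve : ∀ t : ℝ, HasDerivAt (fun s : ℝ => X + (s ^ 2 * c) • A) ((2 * t * c) • A) t := by
    intro t
    have hs : HasDerivAt (fun s : ℝ => s ^ 2 * c) (2 * t * c) t := by
      have := (hasDerivAt_pow 2 t).mul_const c
      norm_num at this
      simpa [mul_comm, mul_assoc, mul_left_comm] using this
    exact (hs.smul_const A).const_add X
  have hstep : ∀ t : ℝ, HasDerivAt (fun s : ℝ => f (X + (s ^ 2 * c) • A))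
      ((2 * t * c) * fderiv ℝ f (X + (t ^ 2 * c) • A) A) t := by
    intro t
    have := (hdf (X + (t ^ 2 * c) • A)).hasFDerivAt.comp_hasDerivAt t (hcurve t)
    simpa [_root_.map_smul, smul_eq_mul, Function.comp_def] using this
  have hder : deriv (fun s : ℝ => f (X + (s ^ 2 * c) • A))
      = fun t => (2 * t * c) * fderiv ℝ f (X + (t ^ 2 * c) • A) A :=
    funext fun t => (hstep t).deriv
  rw [hder]
  have hF : ContDiff ℝ 1 (fderiv ℝ f) := hf.fderiv_right (by norm_num)
  obtain ⟨W, hw⟩ : ∃ W, HasDerivAt (fun t : ℝ => fderiv ℝ f (X + (t ^ 2 * c) • A) A) W 0 := by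
    have hd' : HasFDerivAt (fderiv ℝ f) (fderiv ℝ (fderiv ℝ f) (X + ((0:ℝ) ^ 2 * c) • A))
        (X + ((0:ℝ) ^ 2 * c) • A) := ((hF.differentiable (by norm_num)) _).hasFDerivAt
    have h1 := hd'.comp_hasDerivAt (0:ℝ) (hcurve 0)
    exact ⟨_, h1.clm_apply (hasDerivAt_const (0:ℝ) A)⟩
  have hu : HasDerivAt (fun t : ℝ => 2 * t * c) (2 * c) 0 := by
    have := ((hasDerivAt_id (0:ℝ)).const_mul (2:ℝ)).mul_const c
    simpa using this
  have hprod := hu.mul hw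
  have hval := hprod.deriv
  simp only [mul_zero, zero_mul] at hval
  rw [show (fun t : ℝ => 2 * t * c * fderiv ℝ f (X + (t ^ 2 * c) • A) A)
    = ((fun t : ℝ => 2 * t * c) * fun t => fderiv ℝ f (X + (t ^ 2 * c) • A) A) from rfl, hval]
  simp

lemma deriv_first {f : E → ℝ} (hf : Differentiable ℝ f) (X X' : E) :
    deriv (fun t : ℝ => f (X + (2 * t + t ^ 2) • X')) 0 = 2 * fderiv ℝ f X X' := by
  have hs : HasDerivAt (fun t : ℝ => 2 * t + t ^ 2) 2 0 := by
    have h1 : HasDerivAt (fun t : ℝ => 2 * t) 2 0 := by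
      simpa using (hasDerivAt_id (0:ℝ)).const_mul (2:ℝ)
    have h2 : HasDerivAt (fun t : ℝ => t ^ 2) 0 0 := by
      simpa using hasDerivAt_pow 2 (0:ℝ)
    simpa [Pi.add_def] using h1.add h2
  have hcurve : HasDerivAt (fun t : ℝ => X + (2 * t + t ^ 2) • X') ((2:ℝ) • X') 0 :=
    (hs.smul_const X').const_add X
  have hd' : HasFDerivAt f (fderiv ℝ f (X + (2 * (0:ℝ) + (0:ℝ) ^ 2) • X'))
      (X + (2 * (0:ℝ) + (0:ℝ) ^ 2) • X') := (hf _).hasFDerivAt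
  have h := hd'.comp_hasDerivAt (0:ℝ) hcurve
  rw [show (f ∘ fun t : ℝ => X + (2 * t + t ^ 2) • X') = fun t : ℝ => f (X + (2 * t + t ^ 2) • X') from rfl] at h
  rw [h.deriv]
  simp [_root_.map_smul, smul_eq_mul]

end GeneralAux2

section MatrixAux


lemma mInner_add_right {m n : ℕ} (A B C : Matrix (Fin m) (Fin n) ℝ) :
    mInner A (B + C) = mInner A B + mInner A C := by
  simp [mInner, Matrix.mul_add]

lemma mInner_smul_right {m n : ℕ} (A B : Matrix (Fin m) (Fin n) ℝ) (t : ℝ) :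
    mInner A (t • B) = t * mInner A B := by
  simp [mInner, Matrix.mul_smul]

noncomputable def mInnerL {m n : ℕ} (A : Matrix (Fin m) (Fin n) ℝ) :
    Matrix (Fin m) (Fin n) ℝ →L[ℝ] ℝ :=
  LinearMap.toContinuousLinearMap
    { toFun := fun X => mInner A X
      map_add' := fun B C => mInner_add_right A B C
      map_smul' := fun t B => mInner_smul_right A B t }

@[simp] lemma mInnerL_apply {m n : ℕ} (A X : Matrix (Fin m) (Fin n) ℝ) :
    mInnerL A X = mInner A X := rfl

noncomputable def subL (m n : ℕ) :
    Matrix (Fin (m + n)) (Fin (m + n)) ℝ →L[ℝ] Matrix (Fin m) (Fin n) ℝ :=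
  LinearMap.toContinuousLinearMap
    { toFun := fun X => X.submatrix (Fin.castAdd n) (Fin.natAdd m)
      map_add' := fun _ _ => rfl
      map_smul' := fun _ _ => rfl }

@[simp] lemma subL_apply {m n : ℕ} (X : Matrix (Fin (m + n)) (Fin (m + n)) ℝ) :
    subL m n X = X.submatrix (Fin.castAdd n) (Fin.natAdd m) := rfl

noncomputable def traceL (d : ℕ) : Matrix (Fin d) (Fin d) ℝ →L[ℝ] ℝ :=
  LinearMap.toContinuousLinearMap (Matrix.traceLinearMap (Fin d) ℝ ℝ)

@[simp] lemma traceL_apply {d : ℕ} (X : Matrix (Fin d) (Fin d) ℝ) :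
    traceL d X = Matrix.trace X := rfl

@[simp] lemma stack_left {m n r : ℕ} (u : Matrix (Fin m) (Fin r) ℝ)
    (v : Matrix (Fin n) (Fin r) ℝ) (i : Fin m) (k : Fin r) :
    stack u v (Fin.castAdd n i) k = u i k := by
  simp [stack]

@[simp] lemma stack_right {m n r : ℕ} (u : Matrix (Fin m) (Fin r) ℝ)
    (v : Matrix (Fin n) (Fin r) ℝ) (j : Fin n) (k : Fin r) :
    stack u v (Fin.natAdd m j) k = v j k := by
  simp [stack]

lemma stack_add {m n r : ℕ} (u u' : Matrix (Fin m) (Fin r) ℝ)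
    (v v' : Matrix (Fin n) (Fin r) ℝ) :
    stack (u + u') (v + v') = stack u v + stack u' v' := by
  funext i k
  refine Fin.addCases (fun i0 => ?_) (fun j0 => ?_) i <;>
    simp [Matrix.add_apply]

lemma stack_smul {m n r : ℕ} (t : ℝ) (u : Matrix (Fin m) (Fin r) ℝ)
    (v : Matrix (Fin n) (Fin r) ℝ) :
    stack (t • u) (t • v) = t • stack u v := by
  funext i k
  refine Fin.addCases (fun i0 => ?_) (fun j0 => ?_) i <;>
    simp [Matrix.smul_apply]

noncomputable def stackL (m n r : ℕ) :
    (Matrix (Fin m) (Fin r) ℝ × Matrix (Fin n) (Fin r) ℝ) →L[ℝ]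
      Matrix (Fin (m + n)) (Fin r) ℝ :=
  LinearMap.toContinuousLinearMap
    { toFun := fun uv => stack uv.1 uv.2
      map_add' := fun p q => stack_add p.1 q.1 p.2 q.2
      map_smul' := fun t p => stack_smul t p.1 p.2 }

@[simp] lemma stackL_apply {m n r : ℕ}
    (uv : Matrix (Fin m) (Fin r) ℝ × Matrix (Fin n) (Fin r) ℝ) :
    stackL m n r uv = stack uv.1 uv.2 := rfl

noncomputable def entryL (m n : ℕ) (i : Fin m) (j : Fin n) :
    Matrix (Fin m) (Fin n) ℝ →L[ℝ] ℝ :=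
  LinearMap.toContinuousLinearMap
    { toFun := fun Q => Q i j
      map_add' := fun _ _ => rfl
      map_smul' := fun _ _ => rfl }

lemma contDiff_mulT (d r : ℕ) :
    ContDiff ℝ 2 (fun Q : Matrix (Fin d) (Fin r) ℝ => Q * Qᵀ) := by
  have : (fun Q : Matrix (Fin d) (Fin r) ℝ => Q * Qᵀ)
      = fun Q => (fun i j => ∑ k, Q i k * Q j k : Matrix (Fin d) (Fin d) ℝ) := by
    funext Q i j; simp [Matrix.mul_apply]
  rw [this]
  apply contDiff_pi.2
  intro i
  apply contDiff_pi.2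
  intro j
  apply ContDiff.sum
  intro k _
  exact ((entryL d r i k).contDiff).mul ((entryL d r j k).contDiff)

end MatrixAux

section FmatAux

variable {m n K N r : ℕ}

/-- The convex function on the lifted (PSD) space. -/
noncomputable def fmat (G : Fin N → Fin K → Matrix (Fin m) (Fin n) ℝ)
    (b : Fin N → Fin K → ℝ) (ℓ : Fin N → (Fin K → ℝ) → ℝ) (lam : ℝ)
    (P : Matrix (Fin (m + n)) (Fin (m + n)) ℝ)
    (X : Matrix (Fin (m + n)) (Fin (m + n)) ℝ) : ℝ :=
  Lhat G b ℓ (X.submatrix (Fin.castAdd n) (Fin.natAdd m)) + lam / 2 * Matrix.trace X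
    + mInner P X

/-- The lifting map. -/
noncomputable def Phi {m n r : ℕ} (uv : Matrix (Fin m) (Fin r) ℝ × Matrix (Fin n) (Fin r) ℝ) :
    Matrix (Fin (m + n)) (Fin (m + n)) ℝ :=
  stack uv.1 uv.2 * (stack uv.1 uv.2)ᵀ

lemma contDiff_fmat (G : Fin N → Fin K → Matrix (Fin m) (Fin n) ℝ)
    (b : Fin N → Fin K → ℝ) (ℓ : Fin N → (Fin K → ℝ) → ℝ)
    (hsmooth : ∀ i, ContDiff ℝ 2 (ℓ i)) (lam : ℝ)
    (P : Matrix (Fin (m + n)) (Fin (m + n)) ℝ) :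
    ContDiff ℝ 2 (fmat G b ℓ lam P) := by
  have h1 : ContDiff ℝ 2 (fun X : Matrix (Fin (m+n)) (Fin (m+n)) ℝ =>
      Lhat G b ℓ (X.submatrix (Fin.castAdd n) (Fin.natAdd m))) := by
    simp only [Lhat]
    apply ContDiff.mul contDiff_const
    apply ContDiff.sum; intro i _
    apply (hsmooth i).comp
    apply contDiff_pi.2; intro j
    exact contDiff_const.add (((mInnerL (G i j)).comp (subL m n)).contDiff)
  exact (h1.add (contDiff_const.mul (traceL (m+n)).contDiff)).add (mInnerL P).contDiff

lemma convexOn_finset_sum {E : Type*} [NormedAddCommGroup E] [NormedSpace ℝ E]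
    {ι : Type*} (s : Finset ι) (f : ι → E → ℝ)
    (h : ∀ i ∈ s, ConvexOn ℝ Set.univ (f i)) :
    ConvexOn ℝ Set.univ (fun x => ∑ i ∈ s, f i x) := by
  classical
  induction s using Finset.induction with
  | empty => simpa using convexOn_const (0:ℝ) convex_univ
  | @insert a s ha ih =>
    simp only [Finset.sum_insert ha]
    exact (h a (s.mem_insert_self a)).add (ih fun i hi => h i (Finset.mem_insert_of_mem hi))

/-- The affine map `X ↦ (j ↦ b j + ⟨G j, X₁₂⟩)`. -/
noncomputable def affK {m n K : ℕ} (Gi : Fin K → Matrix (Fin m) (Fin n) ℝ) (bi : Fin K → ℝ) :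
    Matrix (Fin (m + n)) (Fin (m + n)) ℝ →ᵃ[ℝ] (Fin K → ℝ) where
  toFun := fun X j => bi j + mInner (Gi j) (X.submatrix (Fin.castAdd n) (Fin.natAdd m))
  linear :=
    { toFun := fun X j => mInner (Gi j) (X.submatrix (Fin.castAdd n) (Fin.natAdd m))
      map_add' := fun X Y => by
        funext j
        show mInner (Gi j) ((X + Y).submatrix (Fin.castAdd n) (Fin.natAdd m)) = _
        rw [show (X + Y).submatrix (Fin.castAdd n) (Fin.natAdd m)
            = X.submatrix (Fin.castAdd n) (Fin.natAdd m)
              + Y.submatrix (Fin.castAdd n) (Fin.natAdd m) from rfl, mInner_add_right]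
        rfl
      map_smul' := fun t X => by
        funext j
        show mInner (Gi j) ((t • X).submatrix (Fin.castAdd n) (Fin.natAdd m)) = _
        rw [show (t • X).submatrix (Fin.castAdd n) (Fin.natAdd m)
            = t • X.submatrix (Fin.castAdd n) (Fin.natAdd m) from rfl, mInner_smul_right]
        rfl }
  map_vadd' := fun p v => by
    funext j
    show bi j + mInner (Gi j) ((v + p).submatrix (Fin.castAdd n) (Fin.natAdd m)) = _
    rw [show (v + p).submatrix (Fin.castAdd n) (Fin.natAdd m)
        = v.submatrix (Fin.castAdd n) (Fin.natAdd m)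
          + p.submatrix (Fin.castAdd n) (Fin.natAdd m) from rfl, mInner_add_right]
    show _ = mInner (Gi j) (v.submatrix (Fin.castAdd n) (Fin.natAdd m))
        + (bi j + mInner (Gi j) (p.submatrix (Fin.castAdd n) (Fin.natAdd m)))
    ring

lemma convexOn_fmat (G : Fin N → Fin K → Matrix (Fin m) (Fin n) ℝ)
    (b : Fin N → Fin K → ℝ) (ℓ : Fin N → (Fin K → ℝ) → ℝ)
    (hconv : ∀ i, ConvexOn ℝ Set.univ (ℓ i)) (lam : ℝ)
    (P : Matrix (Fin (m + n)) (Fin (m + n)) ℝ) :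
    ConvexOn ℝ Set.univ (fmat G b ℓ lam P) := by
  have hA : ConvexOn ℝ Set.univ (fun X : Matrix (Fin (m+n)) (Fin (m+n)) ℝ =>
      Lhat G b ℓ (X.submatrix (Fin.castAdd n) (Fin.natAdd m))) := by
    simp only [Lhat]
    have hsum : ConvexOn ℝ Set.univ
        (fun X : Matrix (Fin (m+n)) (Fin (m+n)) ℝ =>
          ∑ i, ℓ i fun j => b i j
            + mInner (G i j) (X.submatrix (Fin.castAdd n) (Fin.natAdd m))) := by
      refine convexOn_finset_sum _ _ fun i _ => ?_
      have h := (hconv i).comp_affineMap (affK (G i) (b i))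
      rw [Set.preimage_univ] at h
      exact h
    have := hsum.smul (show (0:ℝ) ≤ 1 / (N : ℝ) by positivity)
    simpa [smul_eq_mul] using this
  have hB : ConvexOn ℝ Set.univ (fun X : Matrix (Fin (m+n)) (Fin (m+n)) ℝ =>
      lam / 2 * Matrix.trace X) := by
    refine ⟨convex_univ, fun x _ y _ a c _ _ _ => le_of_eq ?_⟩
    simp [Matrix.trace_add, Matrix.trace_smul, smul_eq_mul]
    ring
  have hC : ConvexOn ℝ Set.univ (fun X : Matrix (Fin (m+n)) (Fin (m+n)) ℝ => mInner P X) := by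
    refine ⟨convex_univ, fun x _ y _ a c _ _ _ => le_of_eq ?_⟩
    simp [mInner_add_right, mInner_smul_right, smul_eq_mul]
  exact (hA.add hB).add hC

lemma frobNorm_sq {a c : ℕ} (A : Matrix (Fin a) (Fin c) ℝ) :
    frobNorm A ^ 2 = ∑ i, ∑ j, A i j ^ 2 :=
  Real.sq_sqrt (Finset.sum_nonneg fun i _ => Finset.sum_nonneg fun j _ => sq_nonneg _)

lemma LhatP_eq (r : ℕ) (G : Fin N → Fin K → Matrix (Fin m) (Fin n) ℝ)
    (b : Fin N → Fin K → ℝ) (ℓ : Fin N → (Fin K → ℝ) → ℝ) (lam : ℝ)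
    (P : Matrix (Fin (m + n)) (Fin (m + n)) ℝ)
    (uv : Matrix (Fin m) (Fin r) ℝ × Matrix (Fin n) (Fin r) ℝ) :
    LhatP r G b ℓ lam P uv = fmat G b ℓ lam P (Phi uv) := by
  unfold LhatP fmat Phi
  have h1 : (stack uv.1 uv.2 * (stack uv.1 uv.2)ᵀ).submatrix (Fin.castAdd n) (Fin.natAdd m)
      = uv.1 * uv.2ᵀ := by
    funext i j
    simp [Matrix.mul_apply, Matrix.submatrix_apply, Matrix.transpose_apply]
  have h2 : Matrix.trace (stack uv.1 uv.2 * (stack uv.1 uv.2)ᵀ)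
      = ∑ i, ∑ k, stack uv.1 uv.2 i k ^ 2 := by
    simp [Matrix.trace, Matrix.diag, Matrix.mul_apply, sq]
  rw [h1, h2, Fin.sum_univ_add]
  simp only [stack_left, stack_right]
  rw [frobNorm_sq, frobNorm_sq]
  ring

end FmatAux

/-- Lemma 4.3: if `L̂_λ` has a global minimizer, `P ⪰ 0` is nonzero, and
`Q̂ = [û; v̂]` is a rank-deficient second-order stationary point of `L̂_{λ,P}`, then
`(û, v̂)` is a global minimizer of `L̂_{λ,P}`. -/
theorem rank_deficient_SOSP_is_global_min
    (m n K N r : ℕ) (hm : 0 < m) (hn : 0 < n) (hK : 0 < K) (hN : 0 < N) (hr : 0 < r)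
    (G : Fin N → Fin K → Matrix (Fin m) (Fin n) ℝ)
    (b : Fin N → Fin K → ℝ) (ℓ : Fin N → (Fin K → ℝ) → ℝ)
    (hconv : ∀ i, ConvexOn ℝ Set.univ (ℓ i))
    (hnonneg : ∀ i x, 0 ≤ ℓ i x)
    (hsmooth : ∀ i, ContDiff ℝ 2 (ℓ i))
    (lam : ℝ) (hlam : 0 ≤ lam)
    (hmin : ∃ δ : Matrix (Fin m) (Fin n) ℝ, ∀ δ' : Matrix (Fin m) (Fin n) ℝ,
      Lhat G b ℓ δ + lam * nuclearNorm δ ≤ Lhat G b ℓ δ' + lam * nuclearNorm δ')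
    (P : Matrix (Fin (m + n)) (Fin (m + n)) ℝ) (hP : P.PosSemidef) (hPne : P ≠ 0)
    (uhat : Matrix (Fin m) (Fin r) ℝ) (vhat : Matrix (Fin n) (Fin r) ℝ)
    (hSOSP : IsSOSP (LhatP r G b ℓ lam P) (uhat, vhat))
    (hdeficient : (stack uhat vhat).rank < r) :
    ∀ uv : Matrix (Fin m) (Fin r) ℝ × Matrix (Fin n) (Fin r) ℝ,
      LhatP r G b ℓ lam P (uhat, vhat) ≤ LhatP r G b ℓ lam P uv := by
  classical
  have hgg : LhatP r G b ℓ lam P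
      = fun p : Matrix (Fin m) (Fin r) ℝ × Matrix (Fin n) (Fin r) ℝ =>
        fmat G b ℓ lam P (Phi p) := funext fun p => LhatP_eq r G b ℓ lam P p
  have hF2 : ContDiff ℝ 2 (fmat G b ℓ lam P) := contDiff_fmat G b ℓ hsmooth lam P
  have hFd : Differentiable ℝ (fmat G b ℓ lam P) := hF2.differentiable (by norm_num)
  have hPhiC : ContDiff ℝ 2
      (Phi : Matrix (Fin m) (Fin r) ℝ × Matrix (Fin n) (Fin r) ℝ
        → Matrix (Fin (m+n)) (Fin (m+n)) ℝ) := by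
    have h := (contDiff_mulT (m+n) r).comp (stackL m n r).contDiff
    exact h
  have hg2 : ContDiff ℝ 2 (fun p : Matrix (Fin m) (Fin r) ℝ × Matrix (Fin n) (Fin r) ℝ =>
      fmat G b ℓ lam P (Phi p)) := hF2.comp hPhiC
  set Qh := stack uhat vhat with hQhdef
  set Xh := Phi (uhat, vhat) with hXhdef
  set φ := fderiv ℝ (fmat G b ℓ lam P) Xh with hφdef
  -- kernel vector from rank deficiency
  obtain ⟨z, hz0, hzker⟩ : ∃ z : Fin r → ℝ, z ≠ 0 ∧ Qh.mulVec z = 0 := by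
    have hk : LinearMap.ker Qh.mulVecLin ≠ ⊥ := by
      intro hbot
      have h1 := LinearMap.finrank_range_add_finrank_ker Qh.mulVecLin
      rw [hbot, finrank_bot, add_zero, Module.finrank_fintype_fun_eq_card,
        Fintype.card_fin] at h1
      have h2 : Qh.rank = r := h1
      omega
    obtain ⟨z, hzmem, hz0⟩ := (Submodule.ne_bot_iff _).1 hk
    exact ⟨z, hz0, by simpa [Matrix.mulVecLin_apply] using hzmem⟩
  set zn := ∑ k, z k ^ 2 with hzndef
  have hznpos : 0 < zn := by
    obtain ⟨k, hk⟩ := Function.ne_iff.1 hz0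
    exact Finset.sum_pos' (fun k _ => sq_nonneg _) ⟨k, Finset.mem_univ k, lt_of_le_of_ne (sq_nonneg _) (Ne.symm (pow_ne_zero 2 hk))⟩
  have hker : ∀ i, ∑ k, Qh i k * z k = 0 := by
    intro i
    have h := congrFun hzker i
    simpa [Matrix.mulVec, dotProduct] using h
  have hXij : ∀ i j, Xh i j = ∑ k, Qh i k * Qh j k := by
    intro i j
    simp [hXhdef, Phi, Matrix.mul_apply, Matrix.transpose_apply, hQhdef]
  -- second-order condition applied to rank-one directions
  have houter : ∀ a : Fin (m+n) → ℝ,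
      0 ≤ φ (Matrix.of fun i j => a i * a j : Matrix (Fin (m+n)) (Fin (m+n)) ℝ) := by
    intro a
    set δ : Matrix (Fin m) (Fin r) ℝ × Matrix (Fin n) (Fin r) ℝ :=
      ((fun i k => a (Fin.castAdd n i) * z k), (fun j k => a (Fin.natAdd m j) * z k)) with hδ
    have hstackδ : stack δ.1 δ.2 = fun i k => a i * z k := by
      funext i k
      refine Fin.addCases (fun i0 => ?_) (fun j0 => ?_) i <;> simp [hδ, stack]
    have hline : ∀ t : ℝ, Phi ((uhat, vhat) + t • δ)
        = Xh + (t ^ 2 * zn) • (Matrix.of fun i j => a i * a j : Matrix (Fin (m+n)) (Fin (m+n)) ℝ) := by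
      intro t
      have hQ : ∀ i k, stack (uhat + t • δ.1) (vhat + t • δ.2) i k
          = Qh i k + t * (a i * z k) := by
        intro i k
        rw [stack_add, stack_smul, hstackδ]
        simp [Matrix.add_apply, Matrix.smul_apply, hQhdef, Pi.smul_apply, smul_eq_mul]
        rfl
      funext i j
      have hent : Phi ((uhat, vhat) + t • δ) i j
          = ∑ k, (Qh i k + t * (a i * z k)) * (Qh j k + t * (a j * z k)) := by
        simp only [Phi, Matrix.mul_apply, Matrix.transpose_apply]
        refine Finset.sum_congr rfl fun k _ => ?_
        rw [show ((uhat, vhat) + t • δ).1 = uhat + t • δ.1 from rfl,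
          show ((uhat, vhat) + t • δ).2 = vhat + t • δ.2 from rfl, hQ, hQ]
      rw [hent]
      have hexp : ∀ k, (Qh i k + t * (a i * z k)) * (Qh j k + t * (a j * z k))
          = Qh i k * Qh j k + (t * a j) * (Qh i k * z k) + (t * a i) * (Qh j k * z k)
            + (t ^ 2 * (a i * a j)) * z k ^ 2 := fun k => by ring
      rw [Finset.sum_congr rfl fun k _ => hexp k]
      rw [Finset.sum_add_distrib, Finset.sum_add_distrib, Finset.sum_add_distrib,
        ← Finset.mul_sum, ← Finset.mul_sum, ← Finset.mul_sum, hker i, hker j]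
      have hrhs : (Xh + (t ^ 2 * zn)
          • (Matrix.of fun i j => a i * a j : Matrix (Fin (m+n)) (Fin (m+n)) ℝ)) i j
          = Xh i j + (t ^ 2 * zn) * (a i * a j) := by
        simp [Matrix.add_apply, Matrix.smul_apply, smul_eq_mul, Matrix.of_apply]
      rw [hrhs, hXij i j, hzndef]
      ring
    have hqf := hSOSP.2 δ
    rw [hgg] at hqf
    rw [bridge1 hg2 (uhat, vhat) δ] at hqf
    beta_reduce at hqf
    have hfun : (fun t : ℝ => fmat G b ℓ lam P (Phi ((uhat, vhat) + t • δ)))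
        = fun t : ℝ => fmat G b ℓ lam P (Xh + (t ^ 2 * zn)
          • (Matrix.of fun i j => a i * a j : Matrix (Fin (m+n)) (Fin (m+n)) ℝ)) :=
      funext fun t => by rw [hline t]
    rw [hfun] at hqf
    rw [deriv2_quad hF2 Xh
      (Matrix.of fun i j => a i * a j : Matrix (Fin (m+n)) (Fin (m+n)) ℝ) zn] at hqf
    have hqf : 0 ≤ 2 * zn * φ (Matrix.of fun i j => a i * a j) := hqf
    nlinarith [hqf, hznpos]
  -- first-order condition: φ Xh = 0
  have hfirst : φ Xh = 0 := by
    have hgrad : fderiv ℝ (fun p : Matrix (Fin m) (Fin r) ℝ × Matrix (Fin n) (Fin r) ℝ =>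
        fmat G b ℓ lam P (Phi p)) (uhat, vhat) = 0 := by
      rw [← hgg]; exact hSOSP.1
    have hb := bridge2 (hg2.differentiable (by norm_num)) (uhat, vhat) (uhat, vhat)
    erw [hgrad] at hb
    beta_reduce at hb
    have hline2 : (fun t : ℝ => fmat G b ℓ lam P (Phi ((uhat, vhat) + t • (uhat, vhat))))
        = fun t : ℝ => fmat G b ℓ lam P (Xh + (2 * t + t ^ 2) • Xh) := by
      funext t
      congr 1
      have hQ : ∀ i k, stack (uhat + t • uhat) (vhat + t • vhat) i k
          = Qh i k + t * Qh i k := by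
        intro i k
        rw [stack_add, stack_smul]
        simp [Matrix.add_apply, Matrix.smul_apply, hQhdef]
      funext i j
      have hent : Phi ((uhat, vhat) + t • (uhat, vhat)) i j
          = ∑ k, (Qh i k + t * Qh i k) * (Qh j k + t * Qh j k) := by
        simp only [Phi, Matrix.mul_apply, Matrix.transpose_apply]
        refine Finset.sum_congr rfl fun k _ => ?_
        rw [show ((uhat, vhat) + t • (uhat, vhat)).1 = uhat + t • uhat from rfl,
          show ((uhat, vhat) + t • (uhat, vhat)).2 = vhat + t • vhat from rfl, hQ, hQ]
      rw [hent]
      have hexp : ∀ k, (Qh i k + t * Qh i k) * (Qh j k + t * Qh j k)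
          = Qh i k * Qh j k + (2 * t + t ^ 2) * (Qh i k * Qh j k) := fun k => by ring
      rw [Finset.sum_congr rfl fun k _ => hexp k, Finset.sum_add_distrib, ← Finset.mul_sum]
      have hrhs : (Xh + (2 * t + t ^ 2) • Xh) i j = Xh i j + (2 * t + t ^ 2) * Xh i j := by
        simp [Matrix.add_apply, Matrix.smul_apply, smul_eq_mul, Matrix.of_apply]
      rw [hrhs, hXij i j]
    rw [hline2] at hb
    have h2 := deriv_first hFd Xh Xh
    rw [hb] at h2
    have h2 : (0:ℝ) = 2 * φ Xh := h2
    linarith [h2]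
  -- Q Qᵀ is a sum of outer products
  intro uv
  have hsum : Phi uv = ∑ k : Fin r,
      (Matrix.of fun i j => stack uv.1 uv.2 i k * stack uv.1 uv.2 j k
        : Matrix (Fin (m+n)) (Fin (m+n)) ℝ) := by
    funext i j
    simp [Phi, Matrix.mul_apply, Matrix.transpose_apply, Matrix.sum_apply, Matrix.of_apply]
  have hpos : 0 ≤ φ (Phi uv) := by
    rw [hsum, map_sum]
    exact Finset.sum_nonneg fun k _ => houter (fun i => stack uv.1 uv.2 i k)
  have hgi := convex_grad_ineq (convexOn_fmat G b ℓ hconv lam P)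
    (hFd Xh).hasFDerivAt (Phi uv)
  have hsub : φ (Phi uv - Xh) = φ (Phi uv) - φ Xh := map_sub φ _ _
  rw [hgg]
  show fmat G b ℓ lam P (Phi (uhat, vhat)) ≤ fmat G b ℓ lam P (Phi uv)
  rw [← hXhdef]
  have hgi : fmat G b ℓ lam P Xh + φ (Phi uv - Xh) ≤ fmat G b ℓ lam P (Phi uv) := hgi
  linarith [hgi, hpos, hfirst, hsub]
end
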